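/- arXiv:2511.14804 — 4 statements merged into one kernel-verified Lean document; each statement's English description precedes it below -/
import Mathlib

section
/- For the unit square S = [0,1] × [0,1] ⊆ ℝ² (with the Euclidean metric), the 2-dimensional Hausdorff measure satisfies H²(S) ≥ 4/π. -/
open MeasureTheory ENNReal

noncomputable section

namespace SquareHausdorffAux

open Set Bornology

/-- Euclidean-distance-squared diameter bound predicate on subsets of `ℝ × ℝ`. -/
def P (A : Set (ℝ × ℝ)) (d : ℝ) : Prop :=
  ∀ p ∈ A, ∀ q ∈ A, (p.1 - q.1) ^ 2 + (p.2 - q.2) ^ 2 ≤ d ^ 2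

/-- Measure of the vertical section. -/
def m (A : Set (ℝ × ℝ)) (x : ℝ) : ℝ≥0∞ := volume {t | (x, t) ∈ A}

/-- Steiner symmetrization in the second coordinate. -/
def sym (A : Set (ℝ × ℝ)) : Set (ℝ × ℝ) :=
  {p | (∃ t, (p.1, t) ∈ A) ∧ ENNReal.ofReal (2 * |p.2|) ≤ m A p.1}

lemma sec_eq (A : Set (ℝ × ℝ)) (x : ℝ) : {t | (x, t) ∈ A} = Prod.mk x ⁻¹' A := rfl

lemma measurable_m {A : Set (ℝ × ℝ)} (hA : MeasurableSet A) : Measurable (m A) := by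
  exact measurable_measure_prodMk_left (ν := (volume : Measure ℝ)) hA

lemma sec_compact {A : Set (ℝ × ℝ)} (hA : IsCompact A) (x : ℝ) :
    IsCompact {t | (x, t) ∈ A} := by
  refine (hA.image continuous_snd).of_isClosed_subset
    (hA.isClosed.preimage (Continuous.prodMk_right x)) ?_
  intro t ht
  exact ⟨(x, t), ht, rfl⟩

lemma m_ne_top {A : Set (ℝ × ℝ)} (hA : IsCompact A) (x : ℝ) : m A x ≠ ⊤ :=
  (sec_compact hA x).measure_lt_top.ne

lemma measurableSet_sym {A : Set (ℝ × ℝ)} (hA : IsCompact A) : MeasurableSet (sym A) := by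
  have h1 : MeasurableSet (Prod.fst '' A) := (hA.image continuous_fst).isClosed.measurableSet
  have h2 : Measurable (m A) := measurable_m hA.isClosed.measurableSet
  have : sym A = (Prod.fst ⁻¹' (Prod.fst '' A)) ∩
      {p : ℝ × ℝ | ENNReal.ofReal (2 * |p.2|) ≤ m A p.1} := by
    ext p
    simp only [sym, mem_setOf_eq, mem_inter_iff, mem_preimage, mem_image]
    constructor
    · rintro ⟨⟨t, ht⟩, h⟩
      exact ⟨⟨(p.1, t), ht, rfl⟩, h⟩
    · rintro ⟨⟨⟨q1, q2⟩, hq, hq1⟩, h⟩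
      exact ⟨⟨q2, by simp only [← hq1]; exact hq⟩, h⟩
  rw [this]
  refine (measurable_fst h1).inter ?_
  exact measurableSet_le
    ((ENNReal.measurable_ofReal.comp ((measurable_const.mul (measurable_snd.abs))))) (h2.comp measurable_fst)

lemma vol_sym {A : Set (ℝ × ℝ)} (hA : IsCompact A) : volume (sym A) = volume A := by
  rw [Measure.volume_eq_prod, Measure.prod_apply (measurableSet_sym hA),
    Measure.prod_apply hA.isClosed.measurableSet]
  refine lintegral_congr fun x => ?_
  rcases eq_empty_or_nonempty (Prod.mk x ⁻¹' A) with he | ⟨t0, ht0⟩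
  · have : Prod.mk x ⁻¹' sym A = ∅ := by
      ext t
      simp only [Set.mem_preimage, sym, mem_setOf_eq, Set.mem_empty_iff_false, iff_false,
        not_and]
      rintro ⟨t', ht'⟩
      have : t' ∈ Prod.mk x ⁻¹' A := ht'
      rw [he] at this
      exact absurd this (Set.notMem_empty t')
    rw [this, he]
  · have hfin := m_ne_top hA x
    have : Prod.mk x ⁻¹' sym A = Icc (-((m A x).toReal / 2)) ((m A x).toReal / 2) := by
      ext t
      simp only [mem_preimage, sym, mem_setOf_eq, mem_Icc]
      constructor
      · rintro ⟨-, h⟩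
        have := (ENNReal.ofReal_le_iff_le_toReal hfin).1 h
        constructor <;> [nlinarith [abs_nonneg t, neg_abs_le t]; nlinarith [le_abs_self t]]
      · rintro ⟨h1, h2⟩
        refine ⟨⟨t0, ht0⟩, (ENNReal.ofReal_le_iff_le_toReal hfin).2 ?_⟩
        rcases abs_cases t with ⟨h, -⟩ | ⟨h, -⟩ <;> nlinarith
    rw [this, Real.volume_Icc]
    have h0 : 0 ≤ (m A x).toReal := ENNReal.toReal_nonneg
    rw [show (m A x).toReal / 2 - -((m A x).toReal / 2) = (m A x).toReal by ring,
      ENNReal.ofReal_toReal hfin]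
    rfl

lemma bounded_of_P {A : Set (ℝ × ℝ)} {d : ℝ} (hP : P A d) : IsBounded A := by
  rcases eq_empty_or_nonempty A with rfl | ⟨p0, hp0⟩
  · exact isBounded_empty
  refine (Metric.isBounded_Icc (p0.1 - |d|, p0.2 - |d|) (p0.1 + |d|, p0.2 + |d|)).subset ?_
  intro q hq
  have h := hP q hq p0 hp0
  have h1 : (q.1 - p0.1) ^ 2 ≤ d ^ 2 := by nlinarith [sq_nonneg (q.2 - p0.2)]
  have h2 : (q.2 - p0.2) ^ 2 ≤ d ^ 2 := by nlinarith [sq_nonneg (q.1 - p0.1)]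
  have hd2 : d ^ 2 = |d| ^ 2 := (sq_abs d).symm
  constructor
  · constructor <;> [skip; skip] <;> simp only [] <;> nlinarith [abs_nonneg d, sq_nonneg (q.1 - p0.1 - |d|), sq_nonneg (q.1 - p0.1 + |d|)]
  · constructor <;> simp only [] <;> nlinarith [abs_nonneg d, sq_nonneg (q.2 - p0.2 - |d|), sq_nonneg (q.2 - p0.2 + |d|)]

lemma P_closure {A : Set (ℝ × ℝ)} {d : ℝ} (hP : P A d) : P (closure A) d := by
  have hc : IsClosed {pq : (ℝ × ℝ) × (ℝ × ℝ) |
      (pq.1.1 - pq.2.1) ^ 2 + (pq.1.2 - pq.2.2) ^ 2 ≤ d ^ 2} := by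
    apply isClosed_le _ continuous_const
    fun_prop
  intro p hp q hq
  have hsub : A ×ˢ A ⊆ {pq : (ℝ × ℝ) × (ℝ × ℝ) |
      (pq.1.1 - pq.2.1) ^ 2 + (pq.1.2 - pq.2.2) ^ 2 ≤ d ^ 2} := fun pq hpq =>
    hP pq.1 hpq.1 pq.2 hpq.2
  have : closure A ×ˢ closure A ⊆ {pq : (ℝ × ℝ) × (ℝ × ℝ) |
      (pq.1.1 - pq.2.1) ^ 2 + (pq.1.2 - pq.2.2) ^ 2 ≤ d ^ 2} := by
    rw [← closure_prod_eq]
    exact closure_minimal hsub hc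
  exact this (mk_mem_prod hp hq)

lemma P_sym {A : Set (ℝ × ℝ)} {d : ℝ} (hA : IsCompact A) (hP : P A d) : P (sym A) d := by
  rintro p ⟨⟨t1, ht1⟩, hps⟩ q ⟨⟨t2, ht2⟩, hqs⟩
  set C : Set ℝ := {t | (p.1, t) ∈ A} with hC
  set C' : Set ℝ := {t | (q.1, t) ∈ A} with hC'
  have hCc : IsCompact C := sec_compact hA p.1
  have hCc' : IsCompact C' := sec_compact hA q.1
  have hCne : C.Nonempty := ⟨t1, ht1⟩
  have hCne' : C'.Nonempty := ⟨t2, ht2⟩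
  set a := sSup C; set b := sInf C; set a' := sSup C'; set b' := sInf C'
  have ha : a ∈ C := hCc.sSup_mem hCne
  have hb : b ∈ C := hCc.sInf_mem hCne
  have ha' : a' ∈ C' := hCc'.sSup_mem hCne'
  have hb' : b' ∈ C' := hCc'.sInf_mem hCne'
  have hba : b ≤ a := (csInf_le hCc.bddBelow ha).trans (le_refl a)
  have hba' : b' ≤ a' := csInf_le hCc'.bddBelow ha'
  -- m bounds
  have hmC : (m A p.1).toReal ≤ a - b := by
    have hsub : C ⊆ Icc b a := fun t ht =>
      ⟨csInf_le hCc.bddBelow ht, le_csSup hCc.bddAbove ht⟩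
    have := measure_mono (μ := (volume : Measure ℝ)) hsub
    rw [Real.volume_Icc] at this
    have h2 := ENNReal.toReal_mono (by simp) this
    rwa [ENNReal.toReal_ofReal (by linarith)] at h2
  have hmC' : (m A q.1).toReal ≤ a' - b' := by
    have hsub : C' ⊆ Icc b' a' := fun t ht =>
      ⟨csInf_le hCc'.bddBelow ht, le_csSup hCc'.bddAbove ht⟩
    have := measure_mono (μ := (volume : Measure ℝ)) hsub
    rw [Real.volume_Icc] at this
    have h2 := ENNReal.toReal_mono (by simp) this
    rwa [ENNReal.toReal_ofReal (by linarith)] at h2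
  have hp2 : 2 * |p.2| ≤ (m A p.1).toReal := by
    have := ENNReal.toReal_mono (m_ne_top hA p.1) hps
    rwa [ENNReal.toReal_ofReal (by positivity)] at this
  have hq2 : 2 * |q.2| ≤ (m A q.1).toReal := by
    have := ENNReal.toReal_mono (m_ne_top hA q.1) hqs
    rwa [ENNReal.toReal_ofReal (by positivity)] at this
  have habs : |p.2 - q.2| ≤ ((a - b) + (a' - b')) / 2 := by
    have := abs_sub p.2 q.2
    have h1 : |p.2| ≤ (a - b) / 2 := by linarith
    have h2 : |q.2| ≤ (a' - b') / 2 := by linarith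
    calc |p.2 - q.2| ≤ |p.2| + |q.2| := abs_sub _ _
      _ ≤ ((a - b) + (a' - b')) / 2 := by linarith
  rcases le_total (a - b') (a' - b) with hcase | hcase
  · -- use (p.1, b) and (q.1, a')
    have hP' := hP (p.1, b) hb (q.1, a') ha'
    simp only at hP'
    have h1 : |p.2 - q.2| ≤ a' - b := by
      calc |p.2 - q.2| ≤ ((a - b) + (a' - b')) / 2 := habs
        _ = ((a - b') + (a' - b)) / 2 := by ring
        _ ≤ a' - b := by linarith
    have h2 : (p.2 - q.2) ^ 2 ≤ (a' - b) ^ 2 := by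
      nlinarith [abs_nonneg (p.2 - q.2), neg_abs_le (p.2 - q.2), le_abs_self (p.2 - q.2)]
    nlinarith [sq_nonneg (b - a')]
  · -- use (p.1, a) and (q.1, b')
    have hP' := hP (p.1, a) ha (q.1, b') hb'
    simp only at hP'
    have h1 : |p.2 - q.2| ≤ a - b' := by
      calc |p.2 - q.2| ≤ ((a - b) + (a' - b')) / 2 := habs
        _ = ((a - b') + (a' - b)) / 2 := by ring
        _ ≤ a - b' := by linarith
    have h2 : (p.2 - q.2) ^ 2 ≤ (a - b') ^ 2 := by
      nlinarith [abs_nonneg (p.2 - q.2), neg_abs_le (p.2 - q.2), le_abs_self (p.2 - q.2)]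
    nlinarith [sq_nonneg (a - b')]

/-- swap preserves volume for arbitrary sets. -/
lemma vol_swap (A : Set (ℝ × ℝ)) : volume (Prod.swap '' A) = volume A := by
  have hmp : MeasurePreserving (Prod.swap : ℝ × ℝ → ℝ × ℝ) volume volume := by
    rw [Measure.volume_eq_prod]
    exact Measure.measurePreserving_swap
  have : Prod.swap '' A = (MeasurableEquiv.prodComm : ℝ × ℝ ≃ᵐ ℝ × ℝ) ⁻¹' A := by
    rw [Set.image_swap_eq_preimage_swap]; rfl
  rw [this]
  exact hmp.measure_preimage_equiv (f := (MeasurableEquiv.prodComm : ℝ × ℝ ≃ᵐ ℝ × ℝ)) A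

lemma P_swap {A : Set (ℝ × ℝ)} {d : ℝ} (hP : P A d) : P (Prod.swap '' A) d := by
  rintro p ⟨p', hp', rfl⟩ q ⟨q', hq', rfl⟩
  have := hP p' hp' q' hq'
  simp only [Prod.fst_swap, Prod.snd_swap]
  linarith

lemma sym_S2 (A : Set (ℝ × ℝ)) : ∀ x t, (x, t) ∈ sym A → (x, -t) ∈ sym A := by
  rintro x t ⟨h1, h2⟩
  exact ⟨h1, by simpa using h2⟩

lemma sym_S1 {A : Set (ℝ × ℝ)} (h : ∀ x t, (x, t) ∈ A → (-x, t) ∈ A) :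
    ∀ x t, (x, t) ∈ sym A → (-x, t) ∈ sym A := by
  have hsec : ∀ x, {t | (-x, t) ∈ A} = {t | (x, t) ∈ A} := by
    intro x
    ext t
    constructor
    · intro ht
      simpa using h _ _ ht
    · intro ht
      exact h _ _ ht
  rintro x t ⟨⟨t', ht'⟩, h2⟩
  refine ⟨⟨t', h _ _ ht'⟩, ?_⟩
  simpa only [m, hsec] using h2

lemma closure_S2 {A : Set (ℝ × ℝ)} (h : ∀ x t, (x, t) ∈ A → (x, -t) ∈ A) :
    ∀ x t, (x, t) ∈ closure A → (x, -t) ∈ closure A := by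
  intro x t ht
  have hcont : Continuous (fun p : ℝ × ℝ => (p.1, -p.2)) := by fun_prop
  have : (fun p : ℝ × ℝ => (p.1, -p.2)) '' A ⊆ A := by
    rintro p ⟨q, hq, rfl⟩
    exact h _ _ hq
  have hmem : (x, -t) ∈ (fun p : ℝ × ℝ => (p.1, -p.2)) '' closure A := ⟨(x, t), ht, rfl⟩
  exact (((image_closure_subset_closure_image hcont).trans (closure_mono this)) hmem)

/-- The isodiametric inequality in the plane. -/
lemma isodiametric (s : Set (ℝ × ℝ)) (d : ℝ) (hd : 0 ≤ d) (hP : P s d) :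
    volume s ≤ ENNReal.ofReal (Real.pi / 4 * d ^ 2) := by
  classical
  -- K = closure s, compact
  set K := closure s with hK
  have hPK : P K d := P_closure hP
  have hKc : IsCompact K := (bounded_of_P hP).isCompact_closure
  -- first symmetrization
  set C := sym K with hCdef
  have hvolC : volume C = volume K := vol_sym hKc
  have hPC : P C d := P_sym hKc hPK
  have hCS2 : ∀ x t, (x, t) ∈ C → (x, -t) ∈ C := sym_S2 K
  -- D = closure C, compact
  set D := closure C with hDdef
  have hPD : P D d := P_closure hPC
  have hDc : IsCompact D := (bounded_of_P hPC).isCompact_closure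
  have hDS2 : ∀ x t, (x, t) ∈ D → (x, -t) ∈ D := closure_S2 hCS2
  -- second symmetrization (on swapped set)
  set D' := Prod.swap '' D with hD'def
  have hD'c : IsCompact D' := hDc.image continuous_swap
  have hPD' : P D' d := P_swap hPD
  have hD'S1 : ∀ x t, (x, t) ∈ D' → (-x, t) ∈ D' := by
    rintro x t ⟨q, hq, hqe⟩
    have hq1 : q = (t, x) := by
      have := congrArg Prod.swap hqe
      simpa using this
    subst hq1
    exact ⟨(t, -x), hDS2 t x hq, rfl⟩
  set J := sym D' with hJdef
  have hPJ : P J d := P_sym hD'c hPD'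
  have hJS1 : ∀ x t, (x, t) ∈ J → (-x, t) ∈ J := sym_S1 hD'S1
  have hJS2 : ∀ x t, (x, t) ∈ J → (x, -t) ∈ J := sym_S2 D'
  set E := Prod.swap '' J with hEdef
  have hPE : P E d := P_swap hPJ
  have hEc : ∀ p ∈ E, (-p.1, -p.2) ∈ E := by
    rintro p ⟨q, hq, rfl⟩
    exact ⟨(-q.1, -q.2), hJS2 _ _ (hJS1 _ _ hq), rfl⟩
  -- volume chain
  have hvol : volume s ≤ volume E := by
    calc volume s ≤ volume K := measure_mono subset_closure
      _ = volume C := hvolC.symm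
      _ ≤ volume D := measure_mono subset_closure
      _ = volume D' := (vol_swap D).symm
      _ = volume J := (vol_sym hD'c).symm
      _ = volume E := (vol_swap J).symm
  -- E is contained in the disk of radius d/2
  have hsub : E ⊆ {p : ℝ × ℝ | p.1 ^ 2 + p.2 ^ 2 ≤ (d / 2) ^ 2} := by
    intro p hp
    have h := hPE p hp (-p.1, -p.2) (hEc p hp)
    have h' : (p.1 + p.1) ^ 2 + (p.2 + p.2) ^ 2 ≤ d ^ 2 := by
      simpa [sub_neg_eq_add] using h
    simp only [mem_setOf_eq]
    nlinarith [h']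
  -- volume of the disk
  have hdisk : volume {p : ℝ × ℝ | p.1 ^ 2 + p.2 ^ 2 ≤ (d / 2) ^ 2}
      = ENNReal.ofReal (Real.pi / 4 * d ^ 2) := by
    have hpre : (Complex.measurableEquivRealProd : ℂ → ℝ × ℝ) ⁻¹'
        {p : ℝ × ℝ | p.1 ^ 2 + p.2 ^ 2 ≤ (d / 2) ^ 2} = Metric.closedBall 0 (d / 2) := by
      ext z
      simp only [mem_preimage, mem_setOf_eq, Metric.mem_closedBall, Complex.dist_eq, sub_zero]
      have hz : (Complex.measurableEquivRealProd z).1 = z.re ∧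
          (Complex.measurableEquivRealProd z).2 = z.im := ⟨rfl, rfl⟩
      rw [hz.1, hz.2]
      have habs : ‖z‖ ^ 2 = z.re ^ 2 + z.im ^ 2 := by
        rw [Complex.sq_norm, Complex.normSq_apply]; ring
      constructor
      · intro h
        nlinarith [norm_nonneg z, habs]
      · intro h
        nlinarith [norm_nonneg z, habs]
    have := Complex.volume_preserving_equiv_real_prod.measure_preimage_equiv
      (f := Complex.measurableEquivRealProd)
      {p : ℝ × ℝ | p.1 ^ 2 + p.2 ^ 2 ≤ (d / 2) ^ 2}
    rw [← this, hpre, Complex.volume_closedBall]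
    rw [← ENNReal.ofReal_pow (by positivity), ← ENNReal.ofReal_coe_nnreal, NNReal.coe_real_pi,
      ← ENNReal.ofReal_mul (by positivity)]
    congr 1
    ring
  calc volume s ≤ volume E := hvol
    _ ≤ volume {p : ℝ × ℝ | p.1 ^ 2 + p.2 ^ 2 ≤ (d / 2) ^ 2} := measure_mono hsub
    _ = ENNReal.ofReal (Real.pi / 4 * d ^ 2) := hdisk

end SquareHausdorffAux

end

/-- The 2-dimensional Hausdorff measure of the unit square `[0,1] × [0,1] ⊆ ℝ²`
(with the Euclidean metric) is at least `4/π`. -/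
theorem hausdorff_measure_unit_square_ge :
    ENNReal.ofReal (4 / Real.pi) ≤
      μH[(2 : ℝ)] {x : EuclideanSpace ℝ (Fin 2) | ∀ i, x i ∈ Set.Icc (0 : ℝ) 1} := by
  classical
  set F : EuclideanSpace ℝ (Fin 2) ≃ᵐ ℝ × ℝ :=
    (MeasurableEquiv.toLp 2 (Fin 2 → ℝ)).symm.trans MeasurableEquiv.finTwoArrow with hFdef
  have hF : MeasurePreserving F volume volume :=
    (volume_preserving_finTwoArrow ℝ).comp
      (EuclideanSpace.volume_preserving_symm_measurableEquiv_toLp (Fin 2))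
  have hc : (0 : ℝ) ≤ 4 / Real.pi := by positivity
  set μ : Measure (EuclideanSpace ℝ (Fin 2)) := ENNReal.ofReal (4 / Real.pi) • volume with hμ
  have hμle : μ ≤ μH[(2 : ℝ)] := by
    refine Measure.le_hausdorffMeasure 2 μ 1 one_pos fun t ht => ?_
    have hdne : Metric.ediam t ≠ ⊤ := (ht.trans_lt ENNReal.one_lt_top).ne
    set d : ℝ := Metric.diam t with hddef
    have hd : 0 ≤ d := Metric.diam_nonneg
    have hbdd : Bornology.IsBounded t := by
      rw [Metric.isBounded_iff_ediam_ne_top]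
      exact hdne
    -- transfer to ℝ × ℝ
    have hPu : SquareHausdorffAux.P (F '' t) d := by
      rintro p ⟨x, hx, rfl⟩ q ⟨y, hy, rfl⟩
      have hdist : dist x y ≤ d := Metric.dist_le_diam_of_mem hbdd hx hy
      have h1 : (F x).1 = x 0 := rfl
      have h2 : (F x).2 = x 1 := rfl
      have h1' : (F y).1 = y 0 := rfl
      have h2' : (F y).2 = y 1 := rfl
      rw [h1, h2, h1', h2']
      have hsq : dist x y ^ 2 = (x 0 - y 0) ^ 2 + (x 1 - y 1) ^ 2 := by
        rw [EuclideanSpace.dist_eq]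
        rw [Real.sq_sqrt (by positivity)]
        simp [Fin.sum_univ_two, Real.dist_eq, sq_abs]
      nlinarith [dist_nonneg (x := x) (y := y)]
    have hvolt : volume t ≤ volume (F '' t) := by
      have h := hF.measure_preimage_equiv (F '' t)
      rw [Set.preimage_image_eq t F.injective] at h
      exact h.le
    have hkey := SquareHausdorffAux.isodiametric (F '' t) d hd hPu
    have hfinal : μ t ≤ ENNReal.ofReal (d ^ 2) := by
      rw [hμ, Measure.smul_apply, smul_eq_mul]
      calc ENNReal.ofReal (4 / Real.pi) * volume t
          ≤ ENNReal.ofReal (4 / Real.pi) * ENNReal.ofReal (Real.pi / 4 * d ^ 2) :=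
            mul_le_mul_right (hvolt.trans hkey) _
        _ = ENNReal.ofReal (4 / Real.pi * (Real.pi / 4 * d ^ 2)) :=
            (ENNReal.ofReal_mul hc).symm
        _ = ENNReal.ofReal (d ^ 2) := by
            congr 1
            field_simp
    have hdiam : Metric.ediam t ^ (2 : ℝ) = ENNReal.ofReal (d ^ 2) := by
      rw [show (2 : ℝ) = ((2 : ℕ) : ℝ) by norm_num, ENNReal.rpow_natCast,
        ENNReal.ofReal_pow hd, hddef, Metric.diam, ENNReal.ofReal_toReal hdne]
    rw [hdiam]
    exact hfinal
  have hSq : volume {x : EuclideanSpace ℝ (Fin 2) | ∀ i, x i ∈ Set.Icc (0 : ℝ) 1} = 1 := by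
    have hpre : {x : EuclideanSpace ℝ (Fin 2) | ∀ i, x i ∈ Set.Icc (0 : ℝ) 1}
        = (MeasurableEquiv.toLp 2 (Fin 2 → ℝ)).symm ⁻¹'
          (Set.univ.pi fun _ : Fin 2 => Set.Icc (0 : ℝ) 1) := by
      ext x
      simp only [Set.mem_setOf_eq, Set.mem_preimage, Set.mem_pi, Set.mem_univ, true_implies]
      exact Iff.rfl
    rw [hpre,
      (EuclideanSpace.volume_preserving_symm_measurableEquiv_toLp (Fin 2)).measure_preimage_equiv,
      volume_pi_pi]
    simp [Real.volume_Icc]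
  calc ENNReal.ofReal (4 / Real.pi)
      = μ {x : EuclideanSpace ℝ (Fin 2) | ∀ i, x i ∈ Set.Icc (0 : ℝ) 1} := by
        rw [hμ, Measure.smul_apply, smul_eq_mul, hSq, mul_one]
    _ ≤ μH[(2 : ℝ)] {x : EuclideanSpace ℝ (Fin 2) | ∀ i, x i ∈ Set.Icc (0 : ℝ) 1} :=
        hμle _
end

section
/- Let s = log 2 / log 3. Then the s-dimensional Hausdorff measure of the middle-thirds Cantor set C satisfies H^s(C) ≥ 1/4 > 0; in particular dimH(C) ≥ log 2 / log 3. -/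
open MeasureTheory Set
open scoped ENNReal
noncomputable section
namespace CantorLower

/-- binary digit of `y` at position `n` (for `y ∈ [0,1)`). -/
def bit (n : ℕ) (y : ℝ) : ℤ := ⌊2 ^ (n + 1) * y⌋ - 2 * ⌊2 ^ n * y⌋

lemma floor_two_mul (x : ℝ) : 2 * ⌊x⌋ ≤ ⌊2 * x⌋ ∧ ⌊2 * x⌋ < 2 * ⌊x⌋ + 2 := by
  constructor
  · rw [Int.le_floor]; push_cast; linarith [Int.floor_le x]
  · rw [Int.floor_lt]; push_cast; linarith [Int.lt_floor_add_one x]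

lemma bit_eq (n : ℕ) (y : ℝ) : bit n y = 0 ∨ bit n y = 1 := by
  have e : 2 ^ (n + 1) * y = 2 * (2 ^ n * y) := by ring
  have h := floor_two_mul (2 ^ n * y)
  unfold bit
  rw [e]
  omega

/-- the floor at level `n` is obtained from level `n+1` by dividing by 2 -/
lemma floor_succ (n : ℕ) (y : ℝ) : ⌊2 ^ n * y⌋ = ⌊2 ^ (n + 1) * y⌋ / 2 := by
  rcases bit_eq n y with h | h <;> unfold bit at h <;> omega

def cterm (c : ℕ → ℤ) (n : ℕ) : ℝ := 2 * (c n : ℝ) / 3 ^ (n + 1)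

lemma summable_cterm {c : ℕ → ℤ} (hc : ∀ j, c j = 0 ∨ c j = 1) : Summable (cterm c) := by
  apply Summable.of_nonneg_of_le (fun n => ?_) (fun n => ?_)
    (Summable.mul_left 2 (summable_geometric_of_lt_one (by norm_num) (by norm_num : (1:ℝ)/3 < 1)))
  · rcases hc n with h | h <;> simp [cterm, h]
    positivity
  · rcases hc n with h | h <;> simp [cterm, h]
    rw [← one_div, mul_one_div]
    exact div_le_div_of_nonneg_left (by norm_num) (by positivity)
      (pow_le_pow_right₀ (by norm_num) (Nat.le_succ n))

def csum (c : ℕ → ℤ) : ℝ := ∑' n, cterm c n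

lemma csum_nonneg {c : ℕ → ℤ} (hc : ∀ j, c j = 0 ∨ c j = 1) : 0 ≤ csum c :=
  tsum_nonneg fun j => by rcases hc j with h | h <;> simp [cterm, h] <;> positivity

lemma csum_le_one {c : ℕ → ℤ} (hc : ∀ j, c j = 0 ∨ c j = 1) : csum c ≤ 1 := by
  have hs2 : Summable (fun j : ℕ => (2/3) * (1/3:ℝ) ^ j) :=
    (summable_geometric_of_lt_one (by norm_num) (by norm_num)).mul_left _
  have hle : csum c ≤ ∑' j, (2/3) * (1/3:ℝ) ^ j := by
    refine Summable.tsum_le_tsum (fun j => ?_) (summable_cterm hc) hs2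
    have he : (2/3) * (1/3:ℝ) ^ j = 2 / 3 ^ (j+1) := by
      rw [div_pow, one_pow, pow_succ]
      field_simp
    rw [he]
    rcases hc j with h | h <;> simp [cterm, h]
    positivity
  calc csum c ≤ ∑' j, (2/3) * (1/3:ℝ) ^ j := hle
    _ = 1 := by rw [tsum_mul_left, tsum_geometric_of_lt_one (by norm_num) (by norm_num)]; norm_num

lemma csum_split {c : ℕ → ℤ} (hc : ∀ j, c j = 0 ∨ c j = 1) (n : ℕ) :
    csum c = ∑ j ∈ Finset.range n, cterm c j + (3:ℝ)⁻¹ ^ n * csum (fun j => c (j + n)) := by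
  have h := Summable.sum_add_tsum_nat_add (f := cterm c) n (summable_cterm hc)
  rw [csum, ← h]
  congr 1
  rw [csum, ← tsum_mul_left]
  congr 1
  ext j
  simp only [cterm]
  rw [pow_add]
  field_simp
  ring_nf
  have h3 : ((1:ℝ)/3) ^ n * 3 ^ n = 1 := by rw [div_pow, one_pow, one_div_mul_cancel (by positivity)]
  linear_combination (-((c (j + n) : ℝ) * 3 ^ j * 3)) * h3

lemma csum_shift {c : ℕ → ℤ} (hc : ∀ j, c j = 0 ∨ c j = 1) :
    csum c = 2 * (c 0 : ℝ) / 3 + csum (fun j => c (j + 1)) / 3 := by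
  have h := Summable.tsum_eq_zero_add (summable_cterm hc)
  rw [csum, h]
  congr 1
  · simp [cterm]
  · rw [csum, eq_div_iff (by norm_num : (3:ℝ) ≠ 0), ← tsum_mul_right]
    congr 1; ext j
    simp only [cterm]
    ring

lemma mem_preCantorSet {c : ℕ → ℤ} (hc : ∀ j, c j = 0 ∨ c j = 1) (n : ℕ) :
    csum c ∈ preCantorSet n := by
  induction n generalizing c with
  | zero =>
    simp only [preCantorSet_zero, mem_Icc]
    constructor
    · exact csum_nonneg hc
    · exact csum_le_one hc
  | succ n ih =>
    have hc' : ∀ j, c (j + 1) = 0 ∨ c (j + 1) = 1 := fun j => hc (j + 1)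
    rcases hc 0 with h | h
    · exact Or.inl ⟨csum (fun j => c (j + 1)), ih hc', by
        rw [csum_shift hc, h]; push_cast; ring⟩
    · exact Or.inr ⟨csum (fun j => c (j + 1)), ih hc', by
        rw [csum_shift hc, h]; push_cast; ring⟩

lemma csum_mem_cantorSet {c : ℕ → ℤ} (hc : ∀ j, c j = 0 ∨ c j = 1) : csum c ∈ cantorSet :=
  Set.mem_iInter.mpr (mem_preCantorSet hc)

/-- the inverse Cantor function: reads binary digits of `y` and writes them in ternary as 0/2. -/
def g (y : ℝ) : ℝ := csum (fun n => bit n y)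

lemma g_mem_cantorSet (y : ℝ) : g y ∈ cantorSet := csum_mem_cantorSet (fun j => bit_eq j y)

lemma floor_le_floor_of_succ {y y' : ℝ} (n : ℕ)
    (h : ⌊2 ^ (n+1) * y⌋ ≤ ⌊2 ^ (n+1) * y'⌋) : ⌊2 ^ n * y⌋ ≤ ⌊2 ^ n * y'⌋ := by
  rw [floor_succ n y, floor_succ n y']
  omega

lemma floor_eq_of_add {y y' : ℝ} (d : ℕ) : ∀ j, ⌊2 ^ (j + d) * y⌋ = ⌊2 ^ (j + d) * y'⌋ →
    ⌊2 ^ j * y⌋ = ⌊2 ^ j * y'⌋ := by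
  induction d with
  | zero => intro j h; simpa using h
  | succ d ih =>
    intro j h
    apply ih j
    have h2 : ⌊2 ^ ((j + d) + 1) * y⌋ = ⌊2 ^ ((j + d) + 1) * y'⌋ := by
      rw [show (j + d) + 1 = j + (d + 1) by ring]; exact h
    rw [floor_succ (j + d) y, floor_succ (j + d) y', h2]

lemma bit_eq_of_floor {y y' : ℝ} {n j : ℕ} (hj : j + 1 ≤ n)
    (h : ⌊2 ^ n * y⌋ = ⌊2 ^ n * y'⌋) : bit j y = bit j y' := by
  have h1 : ⌊2 ^ (j + 1) * y⌋ = ⌊2 ^ (j + 1) * y'⌋ := by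
    obtain ⟨d, rfl⟩ := Nat.exists_eq_add_of_le hj
    exact floor_eq_of_add d (j + 1) (by rwa [Nat.add_comm (j+1) d] at h ⊢)
  have h2 : ⌊2 ^ j * y⌋ = ⌊2 ^ j * y'⌋ := by
    rw [floor_succ j y, floor_succ j y', h1]
  unfold bit
  omega

lemma sep : ∀ n : ℕ, ∀ y y' : ℝ, y ∈ Ico (0:ℝ) 1 → y' ∈ Ico (0:ℝ) 1 →
    ⌊2 ^ n * y⌋ < ⌊2 ^ n * y'⌋ → g y + (3:ℝ)⁻¹ ^ n ≤ g y' := by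
  intro n
  induction n with
  | zero =>
    intro y y' hy hy' hlt
    exfalso
    have h1 : ⌊(1:ℝ) * y⌋ = 0 := by
      rw [one_mul, Int.floor_eq_zero_iff]; exact ⟨hy.1, hy.2⟩
    have h2 : ⌊(1:ℝ) * y'⌋ = 0 := by
      rw [one_mul, Int.floor_eq_zero_iff]; exact ⟨hy'.1, hy'.2⟩
    simp only [pow_zero] at hlt
    omega
  | succ n ih =>
    intro y y' hy hy' hlt
    have hle : ⌊2 ^ n * y⌋ ≤ ⌊2 ^ n * y'⌋ := floor_le_floor_of_succ n hlt.le
    rcases hle.lt_or_eq with hlt' | heq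
    · have := ih y y' hy hy' hlt'
      have h3 : (3:ℝ)⁻¹ ^ (n+1) ≤ 3⁻¹ ^ n :=
        pow_le_pow_of_le_one (by norm_num) (by norm_num) (Nat.le_succ n)
      linarith
    · -- bits below n agree; bit n differs
      have hbits : ∀ j, j < n → bit j y = bit j y' := fun j hj =>
        bit_eq_of_floor (by omega) heq
      have hbn : bit n y = 0 ∧ bit n y' = 1 := by
        have h1 := bit_eq n y
        have h2 := bit_eq n y'
        unfold bit at h1 h2 ⊢
        omega
      have hcy : ∀ j, bit j y = 0 ∨ bit j y = 1 := fun j => bit_eq j y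
      have hcy' : ∀ j, bit j y' = 0 ∨ bit j y' = 1 := fun j => bit_eq j y'
      have hsy := csum_split hcy (n + 1)
      have hsy' := csum_split hcy' (n + 1)
      have hsum_eq : ∑ j ∈ Finset.range n, cterm (fun k => bit k y) j
          = ∑ j ∈ Finset.range n, cterm (fun k => bit k y') j := by
        apply Finset.sum_congr rfl
        intro j hj
        simp only [cterm, hbits j (Finset.mem_range.mp hj)]
      have hterm_y : cterm (fun k => bit k y) n = 0 := by simp [cterm, hbn.1]
      have hterm_y' : cterm (fun k => bit k y') n = 2 / 3 ^ (n + 1) := by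
        simp [cterm, hbn.2]
      have htail_y : csum (fun j => bit (j + (n+1)) y) ≤ 1 :=
        csum_le_one (fun j => bit_eq _ y)
      have htail_y' : 0 ≤ csum (fun j => bit (j + (n+1)) y') :=
        csum_nonneg (fun j => bit_eq _ y')
      have hpow : (3:ℝ)⁻¹ ^ (n+1) = 1 / 3 ^ (n+1) := by
        rw [inv_pow, one_div]
      have hgy : g y = ∑ j ∈ Finset.range n, cterm (fun k => bit k y) j
          + 3⁻¹ ^ (n+1) * csum (fun j => bit (j + (n+1)) y) := by
        rw [g, hsy, Finset.sum_range_succ, hterm_y, add_zero]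
      have hgy' : g y' = ∑ j ∈ Finset.range n, cterm (fun k => bit k y') j
          + 2 / 3 ^ (n+1)
          + 3⁻¹ ^ (n+1) * csum (fun j => bit (j + (n+1)) y') := by
        rw [g, hsy', Finset.sum_range_succ, hterm_y']
      have hq : (3:ℝ)⁻¹ ^ (n+1) * csum (fun j => bit (j + (n+1)) y) ≤ 3⁻¹ ^ (n+1) := by
        calc (3:ℝ)⁻¹ ^ (n+1) * csum (fun j => bit (j + (n+1)) y)
            ≤ 3⁻¹ ^ (n+1) * 1 := by
              apply mul_le_mul_of_nonneg_left htail_y (by positivity)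
          _ = 3⁻¹ ^ (n+1) := mul_one _
      have hq' : 0 ≤ (3:ℝ)⁻¹ ^ (n+1) * csum (fun j => bit (j + (n+1)) y') := by
        apply mul_nonneg (by positivity) htail_y'
      have h2 : (2:ℝ) / 3 ^ (n+1) = 2 * 3⁻¹ ^ (n+1) := by
        rw [inv_pow, div_eq_mul_inv]
      rw [hgy, hgy', hsum_eq]
      linarith

lemma measurable_g : Measurable g := by
  have hterm : ∀ j : ℕ, Measurable (fun y => cterm (fun n => bit n y) j) := by
    intro j
    simp only [cterm, bit]
    apply Measurable.div _ measurable_const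
    apply Measurable.mul measurable_const
    apply Measurable.comp (measurable_from_top (f := (Int.cast : ℤ → ℝ)))
    exact (Int.measurable_floor.comp (measurable_const_mul _)).sub
      (((Int.measurable_floor.comp (measurable_const_mul _))).const_mul 2)
  apply measurable_of_tendsto_metrizable
    (f := fun N y => ∑ j ∈ Finset.range N, cterm (fun n => bit n y) j)
  · intro N
    exact Finset.measurable_sum _ fun j _ => hterm j
  · rw [tendsto_pi_nhds]
    intro y
    exact (summable_cterm (fun j => bit_eq j y)).hasSum.tendsto_sum_nat

/-- The Cantor measure: pushforward of Lebesgue measure on `[0,1)` by `g`. -/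
def μC : Measure ℝ := Measure.map g (volume.restrict (Ico (0:ℝ) 1))

lemma μC_apply {B : Set ℝ} (hB : MeasurableSet B) :
    μC B = volume (g ⁻¹' B ∩ Ico (0:ℝ) 1) := by
  rw [μC, Measure.map_apply measurable_g hB,
    Measure.restrict_apply (measurable_g hB)]

lemma μC_cantorSet : μC cantorSet = 1 := by
  rw [μC_apply isClosed_cantorSet.measurableSet]
  have : Ico (0:ℝ) 1 ⊆ g ⁻¹' cantorSet ∩ Ico (0:ℝ) 1 :=
    fun y hy => ⟨g_mem_cantorSet y, hy⟩
  have h2 : g ⁻¹' cantorSet ∩ Ico (0:ℝ) 1 = Ico (0:ℝ) 1 :=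
    subset_antisymm inter_subset_right this
  rw [h2, Real.volume_Ico]
  norm_num

lemma μC_key (n : ℕ) (B : Set ℝ) (hB : MeasurableSet B)
    (hd : ∀ u ∈ B, ∀ v ∈ B, |u - v| < (3:ℝ)⁻¹ ^ n) :
    μC B ≤ ENNReal.ofReal ((2:ℝ)⁻¹ ^ n) := by
  rw [μC_apply hB]
  rcases (g ⁻¹' B ∩ Ico (0:ℝ) 1).eq_empty_or_nonempty with he | ⟨y₀, hy₀⟩
  · rw [he]
    simp
  · set m : ℤ := ⌊2 ^ n * y₀⌋ with hm
    have hsub : g ⁻¹' B ∩ Ico (0:ℝ) 1 ⊆ Ico ((m:ℝ) / 2 ^ n) (((m:ℝ) + 1) / 2 ^ n) := by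
      intro y hy
      have hfl : ⌊2 ^ n * y⌋ = m := by
        by_contra hne
        rcases lt_or_gt_of_ne hne with hlt | hgt
        · have := sep n y y₀ hy.2 hy₀.2 hlt
          have hb := hd _ hy.1 _ hy₀.1
          rw [abs_sub_lt_iff] at hb
          linarith [hb.1, hb.2]
        · have := sep n y₀ y hy₀.2 hy.2 hgt
          have hb := hd _ hy.1 _ hy₀.1
          rw [abs_sub_lt_iff] at hb
          linarith [hb.1, hb.2]
      have h1 : (m:ℝ) ≤ 2 ^ n * y := by rw [← hfl]; exact Int.floor_le _
      have h2 : 2 ^ n * y < (m:ℝ) + 1 := by rw [← hfl]; exact Int.lt_floor_add_one _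
      have hp : (0:ℝ) < 2 ^ n := by positivity
      constructor
      · rw [div_le_iff₀ hp]; linarith
      · rw [lt_div_iff₀ hp]; linarith
    calc volume (g ⁻¹' B ∩ Ico (0:ℝ) 1) ≤ volume (Ico ((m:ℝ) / 2 ^ n) (((m:ℝ) + 1) / 2 ^ n)) :=
          measure_mono hsub
      _ = ENNReal.ofReal ((2:ℝ)⁻¹ ^ n) := by
          rw [Real.volume_Ico]
          congr 1
          rw [inv_pow]
          field_simp
          ring

/-- the similarity dimension -/
def σ : ℝ := Real.log 2 / Real.log 3

lemma σ_pos : 0 < σ :=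
  div_pos (Real.log_pos (by norm_num)) (Real.log_pos (by norm_num))

lemma three_rpow : (3:ℝ) ^ σ = 2 := by
  rw [Real.rpow_def_of_pos (by norm_num), σ,
    mul_div_cancel₀ _ (ne_of_gt (Real.log_pos (by norm_num))), Real.exp_log (by norm_num)]

lemma rpow3 (m : ℕ) : ((3:ℝ)⁻¹ ^ m) ^ σ = (2:ℝ)⁻¹ ^ m := by
  rw [inv_pow, inv_pow, ← Real.rpow_natCast (3:ℝ) m,
    Real.inv_rpow (by positivity), ← Real.rpow_mul (by norm_num), mul_comm,
    Real.rpow_mul (by norm_num), three_rpow, Real.rpow_natCast]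

lemma μC_key' (n : ℕ) (s : Set ℝ) (hd : EMetric.diam s < ENNReal.ofReal ((3:ℝ)⁻¹ ^ n)) :
    μC s ≤ ENNReal.ofReal ((2:ℝ)⁻¹ ^ n) := by
  have hdc : EMetric.diam (closure s) < ENNReal.ofReal ((3:ℝ)⁻¹ ^ n) := by
    exact (Metric.ediam_closure s).trans_lt hd
  calc μC s ≤ μC (closure s) := measure_mono subset_closure
    _ ≤ ENNReal.ofReal ((2:ℝ)⁻¹ ^ n) := by
        apply μC_key n _ isClosed_closure.measurableSet
        intro u hu v hv
        rw [← Real.dist_eq, ← edist_lt_ofReal]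
        exact lt_of_le_of_lt (EMetric.edist_le_diam_of_mem hu hv) hdc

lemma main_estimate (s : Set ℝ) (hs : EMetric.diam s ≤ ENNReal.ofReal (1/2)) :
    ((4:ℝ≥0∞)⁻¹ • μC) s ≤ EMetric.diam s ^ σ := by
  rw [Measure.smul_apply, smul_eq_mul]
  rcases eq_or_ne (EMetric.diam s) 0 with h0 | h0
  · have hz : μC s = 0 := by
      have hn : ∀ n : ℕ, μC s ≤ ENNReal.ofReal ((2:ℝ)⁻¹ ^ n) := fun n => by
        apply μC_key' n
        rw [h0]
        exact ENNReal.ofReal_pos.mpr (by positivity)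
      have ht : Filter.Tendsto (fun n : ℕ => ENNReal.ofReal ((2:ℝ)⁻¹ ^ n))
          Filter.atTop (nhds 0) := by
        rw [show (0:ℝ≥0∞) = ENNReal.ofReal 0 by simp]
        exact ENNReal.tendsto_ofReal
          (tendsto_pow_atTop_nhds_zero_of_lt_one (by norm_num) (by norm_num))
      exact le_antisymm (ge_of_tendsto' ht hn) zero_le
    rw [hz, mul_zero]
    exact zero_le
  · have hfin : EMetric.diam s ≠ ⊤ := ne_top_of_le_ne_top ENNReal.ofReal_ne_top hs
    set L : ℝ := (EMetric.diam s).toReal with hL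
    have hL0 : 0 < L := ENNReal.toReal_pos h0 hfin
    have hLhalf : L ≤ 1/2 := ENNReal.toReal_le_of_le_ofReal (by norm_num) hs
    have hDL : EMetric.diam s = ENNReal.ofReal L := (ENNReal.ofReal_toReal hfin).symm
    have hex : ∃ k : ℕ, (3:ℝ)⁻¹ ^ k ≤ L := by
      obtain ⟨k, hk⟩ := exists_pow_lt_of_lt_one hL0 (by norm_num : (3:ℝ)⁻¹ < 1)
      exact ⟨k, hk.le⟩
    set n : ℕ := Nat.find hex with hn
    have hfound : (3:ℝ)⁻¹ ^ n ≤ L := Nat.find_spec hex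
    have hn1 : n ≠ 0 := by
      intro h
      rw [h] at hfound
      simp at hfound
      linarith
    obtain ⟨m, hm⟩ : ∃ m, n = m + 1 := ⟨n - 1, by omega⟩
    have hmin : L < (3:ℝ)⁻¹ ^ m := by
      by_contra hc
      push_neg at hc
      exact absurd (Nat.find_le (by exact hc) : n ≤ m) (by omega)
    rw [hm] at hfound
    have hμ : μC s ≤ ENNReal.ofReal ((2:ℝ)⁻¹ ^ m) := by
      apply μC_key' m
      rw [hDL]
      exact ENNReal.ofReal_lt_ofReal_iff (by positivity) |>.mpr hmin
    have hrpow : EMetric.diam s ^ σ = ENNReal.ofReal (L ^ σ) := by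
      rw [hDL, ← ENNReal.ofReal_rpow_of_pos hL0]
    have hreal : 4⁻¹ * (2:ℝ)⁻¹ ^ m ≤ L ^ σ := by
      have h1 : ((3:ℝ)⁻¹ ^ (m+1)) ^ σ ≤ L ^ σ :=
        Real.rpow_le_rpow (by positivity) hfound σ_pos.le
      rw [rpow3 (m+1)] at h1
      have h2 : (2:ℝ)⁻¹ ^ (m+1) = 2⁻¹ * 2⁻¹ ^ m := by ring
      nlinarith [pow_pos (by norm_num : (0:ℝ) < 2⁻¹) m]
    calc (4:ℝ≥0∞)⁻¹ * μC s ≤ 4⁻¹ * ENNReal.ofReal ((2:ℝ)⁻¹ ^ m) :=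
          mul_le_mul_right hμ _
      _ = ENNReal.ofReal (4⁻¹ * (2:ℝ)⁻¹ ^ m) := by
          rw [ENNReal.ofReal_mul (by norm_num)]
          congr 1
          rw [ENNReal.ofReal_inv_of_pos (by norm_num)]
          norm_num
      _ ≤ ENNReal.ofReal (L ^ σ) := ENNReal.ofReal_le_ofReal hreal
      _ = EMetric.diam s ^ σ := hrpow.symm

lemma hausdorff_ge : (1/4 : ℝ≥0∞) ≤ μH[σ] cantorSet := by
  have hle : ((4:ℝ≥0∞)⁻¹ • μC) ≤ μH[σ] := by
    apply MeasureTheory.Measure.le_hausdorffMeasure σ _ (ENNReal.ofReal (1/2))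
      (ENNReal.ofReal_pos.mpr (by norm_num))
    exact main_estimate
  calc (1/4 : ℝ≥0∞) = (4:ℝ≥0∞)⁻¹ * μC cantorSet := by rw [μC_cantorSet, mul_one, one_div]
    _ = ((4:ℝ≥0∞)⁻¹ • μC) cantorSet := by rw [Measure.smul_apply, smul_eq_mul]
    _ ≤ μH[σ] cantorSet := hle _

end CantorLower
end

/-- For `s = log 2 / log 3`, the `s`-dimensional Hausdorff measure of the middle-thirds
Cantor set is at least `1/4 > 0`; in particular `dimH C ≥ log 2 / log 3`. -/
theorem cantor_hausdorff_lower :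
    ((0 : ℝ≥0∞) < 1 / 4 ∧ (1 / 4 : ℝ≥0∞) ≤ μH[Real.log 2 / Real.log 3] cantorSet) ∧
    ENNReal.ofReal (Real.log 2 / Real.log 3) ≤ dimH cantorSet := by
  have hq : (1/4 : ℝ≥0∞) ≤ μH[Real.log 2 / Real.log 3] cantorSet := CantorLower.hausdorff_ge
  refine ⟨⟨by norm_num, hq⟩, ?_⟩
  have hσ : (0:ℝ) ≤ Real.log 2 / Real.log 3 := CantorLower.σ_pos.le
  have hne : μH[((Real.log 2 / Real.log 3).toNNReal : ℝ)] cantorSet ≠ 0 := by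
    rw [Real.coe_toNNReal _ hσ]
    intro h
    rw [h] at hq
    simp at hq
  have := le_dimH_of_hausdorffMeasure_ne_zero hne
  rwa [ENNReal.ofReal]
end

section
/- Existence and uniqueness of the attractor of an iterated function system: let (X, d) be a non-empty complete metric space and let f₁, …, f_N : X → X (N ≥ 1 finite) be contraction mappings, i.e. for each i there is r_i ∈ [0,1) with d(f_i(x), f_i(y)) ≤ r_i · d(x, y) for all x, y ∈ X. Then there exists a unique non-empty compact set A ⊆ X such that A = ⋃_{i=1}^N f_i(A). -/
open EMetric Set TopologicalSpace Metric
open scoped NNReal ENNReal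

/-- Existence and uniqueness of the attractor of an iterated function system: if `X` is a
non-empty complete metric space and `f 1, …, f N` (`N ≥ 1`) are contractions on `X` with
ratios `r i ∈ [0,1)`, then there is a unique non-empty compact set `A ⊆ X` with
`A = ⋃ i, f i '' A`. -/
theorem ifs_attractor_exists_unique
    {X : Type*} [MetricSpace X] [CompleteSpace X] [Nonempty X]
    (N : ℕ) (hN : 1 ≤ N) (f : Fin N → X → X) (r : Fin N → ℝ)
    (hr : ∀ i, 0 ≤ r i ∧ r i < 1)
    (hf : ∀ i x y, dist (f i x) (f i y) ≤ r i * dist x y) :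
    ∃! A : Set X, A.Nonempty ∧ IsCompact A ∧ A = ⋃ i, f i '' A := by
  have i0 : Fin N := ⟨0, hN⟩
  -- Lipschitz constants
  have hlip : ∀ i, LipschitzWith (r i).toNNReal (f i) := by
    intro i
    apply LipschitzWith.of_dist_le_mul
    intro x y
    rw [Real.coe_toNNReal _ (hr i).1]
    exact hf i x y
  set c : ℝ≥0 := Finset.univ.sup fun i => (r i).toNNReal with hc
  have hc1 : c < 1 := by
    rw [hc]
    apply Finset.sup_lt_iff (by norm_num : (⊥ : ℝ≥0) < 1) |>.2
    intro i _
    exact Real.toNNReal_lt_one.2 (hr i).2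
  have hcle : ∀ i, ((r i).toNNReal : ℝ≥0∞) ≤ (c : ℝ≥0∞) := by
    intro i
    rw [hc]
    exact_mod_cast Finset.le_sup (f := fun i => (r i).toNNReal) (Finset.mem_univ i)
  -- the Hutchinson operator on nonempty compacts
  set F : NonemptyCompacts X → NonemptyCompacts X := fun K =>
    ⟨⟨⋃ i, f i '' (K : Set X), isCompact_iUnion fun i =>
        K.isCompact.image (hlip i).continuous⟩,
      K.nonempty.image (f i0) |>.mono (Set.subset_iUnion (fun i => f i '' (K : Set X)) i0)⟩
    with hF
  have hcarrier : ∀ K : NonemptyCompacts X, (F K : Set X) = ⋃ i, f i '' (K : Set X) :=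
    fun _ => rfl
  -- key estimate
  have key : ∀ s t : NonemptyCompacts X, ∀ x ∈ (F s : Set X),
      infEdist x (F t : Set X) ≤ (c : ℝ≥0∞) * hausdorffEdist (s : Set X) (t : Set X) := by
    intro s t x hx
    rw [hcarrier] at hx
    obtain ⟨i, z, hz, rfl⟩ := by simpa using hx
    obtain ⟨w, hw, hwe⟩ := t.isCompact.exists_infEdist_eq_edist t.nonempty z
    calc infEdist (f i z) (F t : Set X)
        ≤ edist (f i z) (f i w) := by
          apply infEdist_le_edist_of_mem
          rw [hcarrier]
          exact Set.mem_iUnion.2 ⟨i, Set.mem_image_of_mem _ hw⟩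
      _ ≤ ((r i).toNNReal : ℝ≥0∞) * edist z w := hlip i z w
      _ ≤ (c : ℝ≥0∞) * hausdorffEdist (s : Set X) (t : Set X) := by
          apply mul_le_mul' (hcle i)
          rw [← hwe]
          exact infEdist_le_hausdorffEdist_of_mem hz
  have hcontr : ContractingWith c F := by
    refine ⟨hc1, fun s t => ?_⟩
    have : edist (F s) (F t) = hausdorffEdist (F s : Set X) (F t : Set X) := rfl
    rw [this]
    have het : edist s t = hausdorffEdist (s : Set X) (t : Set X) := rfl
    rw [het]
    apply hausdorffEdist_le_of_infEdist
    · exact fun x hx => key s t x hx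
    · intro x hx
      rw [show hausdorffEdist (s : Set X) (t : Set X) = hausdorffEdist (t : Set X) (s : Set X) from
        hausdorffEDist_comm]
      exact key t s x hx
  have : Nonempty (NonemptyCompacts X) := by
    obtain ⟨x⟩ := ‹Nonempty X›
    exact ⟨⟨⟨{x}, isCompact_singleton⟩, Set.singleton_nonempty x⟩⟩
  set A₀ := ContractingWith.fixedPoint F hcontr with hA₀
  have hfix : F A₀ = A₀ := hcontr.fixedPoint_isFixedPt
  refine ⟨(A₀ : Set X), ⟨A₀.nonempty, A₀.isCompact, ?_⟩, ?_⟩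
  · conv_lhs => rw [← hfix]
    rw [hcarrier]
  · rintro B ⟨hBne, hBc, hBeq⟩
    set B' : NonemptyCompacts X := ⟨⟨B, hBc⟩, hBne⟩ with hB'
    have hBfix : Function.IsFixedPt F B' := by
      apply NonemptyCompacts.ext
      rw [hcarrier]
      exact hBeq.symm
    have := hcontr.fixedPoint_unique' hBfix hcontr.fixedPoint_isFixedPt
    exact congrArg (fun K : NonemptyCompacts X => (K : Set X)) this
end

section
/- Moran–Hutchinson theorem: let f₁, …, f_N : ℝ^n → ℝ^n (N ≥ 1 finite) be similitudes with ratios r_i ∈ (0,1), i.e. dist(f_i(x), f_i(y)) = r_i · dist(x, y) for all x, y. Let A ⊆ ℝ^n be a non-empty compact set with A = ⋃_{i=1}^N f_i(A), and suppose the open set condition holds: there exists a non-empty bounded open set V ⊆ ℝ^n with f_i(V) ⊆ V for all i and f_i(V) ∩ f_j(V) = ∅ for all i ≠ j. If s ≥ 0 is a real number satisfying ∑_{i=1}^N r_i^s = 1, then dimH(A) = s. -/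
open MeasureTheory

set_option linter.unusedSectionVars false

open MeasureTheory Metric Set
open scoped ENNReal NNReal

namespace MoranAux

variable {N : ℕ} {E : Type*} [MetricSpace E]

/-- Composition of the maps along a word. -/
def comp (f : Fin N → E → E) : List (Fin N) → E → E
  | [] => id
  | i :: w => f i ∘ comp f w

/-- Product of the ratios along a word. -/
def prodr (r : Fin N → ℝ) (w : List (Fin N)) : ℝ := (w.map r).prod

@[simp] theorem comp_nil (f : Fin N → E → E) : comp f [] = id := rfl
@[simp] theorem comp_cons (f : Fin N → E → E) (i : Fin N) (w : List (Fin N)) :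
    comp f (i :: w) = f i ∘ comp f w := rfl

theorem comp_append (f : Fin N → E → E) (u v : List (Fin N)) :
    comp f (u ++ v) = comp f u ∘ comp f v := by
  induction u with
  | nil => rfl
  | cons i u ih => simp [ih, Function.comp_assoc]

@[simp] theorem prodr_nil (r : Fin N → ℝ) : prodr r [] = 1 := rfl
@[simp] theorem prodr_cons (r : Fin N → ℝ) (i : Fin N) (w : List (Fin N)) :
    prodr r (i :: w) = r i * prodr r w := by simp [prodr]

theorem prodr_append (r : Fin N → ℝ) (u v : List (Fin N)) :
    prodr r (u ++ v) = prodr r u * prodr r v := by simp [prodr]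

theorem prodr_pos {r : Fin N → ℝ} (hr : ∀ i, 0 < r i) (w : List (Fin N)) :
    0 < prodr r w := by
  induction w with
  | nil => simp
  | cons i w ih => simpa using mul_pos (hr i) ih

theorem prodr_le_one {r : Fin N → ℝ} (hr : ∀ i, 0 < r i) (hr1 : ∀ i, r i ≤ 1)
    (w : List (Fin N)) : prodr r w ≤ 1 := by
  induction w with
  | nil => simp
  | cons i w ih =>
    simpa using mul_le_one₀ (hr1 i) (prodr_pos hr w).le ih

theorem prodr_nonneg {r : Fin N → ℝ} (hr : ∀ i, 0 ≤ r i) (w : List (Fin N)) :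
    0 ≤ prodr r w := by
  induction w with
  | nil => simp
  | cons i w ih => simpa using mul_nonneg (hr i) ih

theorem prodr_le_pow {r : Fin N → ℝ} {m : ℝ} (hm : 0 ≤ m) (hr : ∀ i, 0 ≤ r i)
    (hrm : ∀ i, r i ≤ m) (w : List (Fin N)) : prodr r w ≤ m ^ w.length := by
  induction w with
  | nil => simp
  | cons i w ih =>
    simp only [prodr_cons, List.length_cons, pow_succ]
    rw [mul_comm (m ^ w.length) m]
    exact mul_le_mul (hrm i) ih (prodr_nonneg hr w) hm

theorem dist_comp {f : Fin N → E → E} {r : Fin N → ℝ}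
    (hf : ∀ i x y, dist (f i x) (f i y) = r i * dist x y) (w : List (Fin N)) (x y : E) :
    dist (comp f w x) (comp f w y) = prodr r w * dist x y := by
  induction w with
  | nil => simp
  | cons i w ih => simp [hf, ih, mul_assoc]

theorem comp_image_subset {f : Fin N → E → E} {S : Set E}
    (h : ∀ i, f i '' S ⊆ S) (w : List (Fin N)) : comp f w '' S ⊆ S := by
  induction w with
  | nil => simp
  | cons i w ih =>
    rw [comp_cons, Set.image_comp]
    exact (Set.image_mono ih).trans (h i)

theorem comp_surjective {f : Fin N → E → E} (h : ∀ i, Function.Surjective (f i))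
    (w : List (Fin N)) : Function.Surjective (comp f w) := by
  induction w with
  | nil => exact Function.surjective_id
  | cons i w ih => exact (h i).comp ih

theorem comp_injective {f : Fin N → E → E} (h : ∀ i, Function.Injective (f i))
    (w : List (Fin N)) : Function.Injective (comp f w) := by
  induction w with
  | nil => exact Function.injective_id
  | cons i w ih => exact (h i).comp ih

/-- image of a ball under a surjective similitude-like map -/
theorem image_ball {g : E → E} {c : ℝ} (hc : 0 < c)
    (hg : ∀ x y, dist (g x) (g y) = c * dist x y) (hsurj : Function.Surjective g)
    (x : E) (ρ : ℝ) : g '' ball x ρ = ball (g x) (c * ρ) := by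
  ext y
  constructor
  · rintro ⟨z, hz, rfl⟩
    simp only [mem_ball] at hz ⊢
    rw [hg]
    exact (mul_lt_mul_iff_right₀ hc).2 hz
  · intro hy
    obtain ⟨z, rfl⟩ := hsurj y
    refine ⟨z, ?_, rfl⟩
    simp only [mem_ball] at hy ⊢
    rw [hg] at hy
    exact lt_of_mul_lt_mul_left hy hc.le


/-- A similitude of a finite-dimensional Euclidean space is surjective. -/
theorem similitude_surjective {F : Type*} [NormedAddCommGroup F] [InnerProductSpace ℝ F]
    [FiniteDimensional ℝ F] {g : F → F} {c : ℝ} (hc : 0 < c)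
    (hg : ∀ x y, dist (g x) (g y) = c * dist x y) : Function.Surjective g := by
  set h : F → F := fun x => c⁻¹ • g x with hh
  have hiso : Isometry h := by
    apply Isometry.of_dist_eq
    intro x y
    rw [hh]
    simp only [dist_smul₀, hg, Real.norm_eq_abs, abs_inv, abs_of_pos hc]
    field_simp
  have hsurj : Function.Surjective h := by
    let ai := hiso.affineIsometryOfStrictConvexSpace
    have hcoe : ⇑ai = h := rfl
    have hinj : Function.Injective ai.toAffineMap := ai.injective
    have hlin : Function.Injective ai.toAffineMap.linear :=
      ai.toAffineMap.linear_injective_iff.2 hinj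
    have hlsurj : Function.Surjective ai.toAffineMap.linear := by
      rwa [← LinearMap.injective_iff_surjective]
    have : Function.Surjective ai.toAffineMap :=
      ai.toAffineMap.linear_surjective_iff.1 hlsurj
    exact this
  intro y
  obtain ⟨x, hx⟩ := hsurj (c⁻¹ • y)
  refine ⟨x, ?_⟩
  have : c • h x = c • (c⁻¹ • y) := by rw [hx]
  rw [hh] at this
  simpa [smul_smul, mul_inv_cancel₀ hc.ne'] using this


/-- `w` is a minimal word with ratio-product `≤ e`. -/
def IsCut (r : Fin N → ℝ) (e : ℝ) (w : List (Fin N)) : Prop :=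
  ∃ u i, w = u ++ [i] ∧ prodr r w ≤ e ∧ e < prodr r u

theorem prodr_le_of_prefix {r : Fin N → ℝ} (hr : ∀ i, 0 < r i) (hr1 : ∀ i, r i ≤ 1)
    {u w : List (Fin N)} (h : u <+: w) : prodr r w ≤ prodr r u := by
  obtain ⟨t, rfl⟩ := h
  rw [prodr_append]
  calc prodr r u * prodr r t ≤ prodr r u * 1 :=
        mul_le_mul_of_nonneg_left (prodr_le_one hr hr1 t) (prodr_pos hr u).le
    _ = prodr r u := mul_one _

theorem cut_exists {r : Fin N → ℝ} (hr : ∀ i, 0 < r i) {e : ℝ} (he1 : e < 1)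
    (w : List (Fin N)) (hw : prodr r w ≤ e) :
    ∃ v, v <+: w ∧ IsCut r e v := by
  induction w using List.reverseRecOn with
  | nil => simp only [prodr_nil] at hw; linarith
  | append_singleton u i ih =>
    by_cases h : prodr r u ≤ e
    · obtain ⟨v, hv, hcut⟩ := ih h
      exact ⟨v, hv.trans ⟨[i], rfl⟩, hcut⟩
    · exact ⟨u ++ [i], List.prefix_rfl, u, i, rfl, hw, not_le.1 h⟩

theorem cut_not_prefix {r : Fin N → ℝ} (hr : ∀ i, 0 < r i) (hr1 : ∀ i, r i ≤ 1) {e : ℝ}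
    {v₁ v₂ : List (Fin N)} (h₁ : IsCut r e v₁) (h₂ : IsCut r e v₂) (hne : v₁ ≠ v₂) :
    ¬ v₁ <+: v₂ := by
  obtain ⟨u₁, i₁, rfl, hle₁, hgt₁⟩ := h₁
  obtain ⟨u₂, i₂, rfl, hle₂, hgt₂⟩ := h₂
  intro hpre
  have hlen : (u₁ ++ [i₁]).length ≤ u₂.length := by
    have h1 := hpre.length_le
    simp only [List.length_append, List.length_singleton] at h1 ⊢
    rcases lt_or_eq_of_le h1 with h | h
    · omega
    · exact absurd (hpre.eq_of_length (by simpa using h)) hne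
  have hpre2 : (u₁ ++ [i₁]) <+: u₂ :=
    List.prefix_of_prefix_length_le hpre ⟨[i₂], rfl⟩ hlen
  have := prodr_le_of_prefix hr hr1 hpre2
  linarith

theorem disjoint_images {f : Fin N → E → E} {V : Set E}
    (hinj : ∀ i, Function.Injective (f i))
    (hVmaps : ∀ i, f i '' V ⊆ V)
    (hVdisj : ∀ i j, i ≠ j → f i '' V ∩ f j '' V = ∅)
    {v₁ v₂ : List (Fin N)} (h₁ : ¬ v₁ <+: v₂) (h₂ : ¬ v₂ <+: v₁) :
    comp f v₁ '' V ∩ comp f v₂ '' V = ∅ := by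
  induction v₁ generalizing v₂ with
  | nil => exact absurd (List.nil_prefix) h₁
  | cons i a ih =>
    cases v₂ with
    | nil => exact absurd (List.nil_prefix) h₂
    | cons j b =>
      by_cases hij : i = j
      · subst hij
        simp only [comp_cons, Set.image_comp]
        rw [← Set.image_inter (hinj i)]
        rw [ih (v₂ := b) (fun h => h₁ (List.cons_prefix_cons.2 ⟨rfl, h⟩)) (fun h => h₂ (List.cons_prefix_cons.2 ⟨rfl, h⟩))]
        simp
      · apply Set.eq_empty_of_subset_empty
        rw [← hVdisj i j hij]
        simp only [comp_cons, Set.image_comp]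
        exact Set.inter_subset_inter
          (Set.image_mono (comp_image_subset hVmaps a))
          (Set.image_mono (comp_image_subset hVmaps b))

/-- Kraft-type inequality: a family of words containing a prefix of every length-`K`
word has total weight at least 1. -/
theorem kraft {N : ℕ} (hN : 1 ≤ N) (p : Fin N → ℝ) (hp : ∀ i, 0 ≤ p i)
    (hp1 : ∑ i, p i = 1) (K : ℕ) (T : Finset (List (Fin N)))
    (hcov : ∀ w : Fin K → Fin N, ∃ v ∈ T, v <+: List.ofFn w) :
    1 ≤ ∑ v ∈ T, (v.map p).prod := by
  have hprodnn : ∀ v : List (Fin N), 0 ≤ (v.map p).prod := by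
    intro v
    apply List.prod_nonneg
    intro x hx
    obtain ⟨i, _, rfl⟩ := List.mem_map.1 hx
    exact hp i
  induction K generalizing T with
  | zero =>
    obtain ⟨v, hvT, hv⟩ := hcov (fun i => i.elim0)
    have : v = [] := List.prefix_nil.mp (by simpa using hv)
    subst this
    calc (1:ℝ) = (([] : List (Fin N)).map p).prod := by simp
      _ ≤ ∑ v ∈ T, (v.map p).prod := Finset.single_le_sum (fun v _ => hprodnn v) hvT
  | succ K ih =>
    by_cases hnil : [] ∈ T
    · calc (1:ℝ) = (([] : List (Fin N)).map p).prod := by simp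
        _ ≤ ∑ v ∈ T, (v.map p).prod := Finset.single_le_sum (fun v _ => hprodnn v) hnil
    · -- partition by head
      have hTeq : T = Finset.univ.biUnion
          (fun i : Fin N => T.filter (fun v => v.head? = some i)) := by
        ext v
        simp only [Finset.mem_biUnion, Finset.mem_univ, Finset.mem_filter, true_and]
        constructor
        · intro hv
          cases v with
          | nil => exact absurd hv hnil
          | cons j b => exact ⟨j, hv, rfl⟩
        · rintro ⟨i, hv, -⟩; exact hv
      have hdisj : ∀ i ∈ (Finset.univ : Finset (Fin N)), ∀ j ∈ Finset.univ, i ≠ j →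
          Disjoint (T.filter (fun v => v.head? = some i))
            (T.filter (fun v => v.head? = some j)) := by
        intro i _ j _ hij
        rw [Finset.disjoint_left]
        intro v hv1 hv2
        simp only [Finset.mem_filter] at hv1 hv2
        exact hij (Option.some_injective _ (hv1.2.symm.trans hv2.2))
      rw [hTeq, Finset.sum_biUnion hdisj]
      have hterm : ∀ i : Fin N,
          p i * 1 ≤ ∑ v ∈ T.filter (fun v => v.head? = some i), (v.map p).prod := by
        intro i
        set Ti : Finset (List (Fin N)) :=
          (T.filter (fun v => v.head? = some i)).image List.tail with hTi
        have hinjOn : ∀ v₁ ∈ T.filter (fun v => v.head? = some i),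
            ∀ v₂ ∈ T.filter (fun v => v.head? = some i),
            v₁.tail = v₂.tail → v₁ = v₂ := by
          intro v₁ h1 v₂ h2 ht
          simp only [Finset.mem_filter] at h1 h2
          rw [← List.cons_head?_tail h1.2, ← List.cons_head?_tail h2.2, ht]
        have hsum : ∑ v' ∈ Ti, p i * (v'.map p).prod
            = ∑ v ∈ T.filter (fun v => v.head? = some i), (v.map p).prod := by
          rw [hTi, Finset.sum_image hinjOn]
          apply Finset.sum_congr rfl
          intro v hv
          simp only [Finset.mem_filter] at hv
          conv_rhs => rw [← List.cons_head?_tail hv.2]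
          simp
        rw [← hsum, ← Finset.mul_sum]
        apply mul_le_mul_of_nonneg_left _ (hp i)
        apply ih
        intro w
        obtain ⟨v, hvT, hvpre⟩ := hcov (Fin.cons i w)
        have hofn : List.ofFn (Fin.cons i w) = i :: List.ofFn w := by
          rw [List.ofFn_succ]
          simp
        rw [hofn] at hvpre
        cases v with
        | nil => exact absurd hvT hnil
        | cons j b =>
          obtain ⟨hji, hbw⟩ := List.cons_prefix_cons.1 hvpre
          refine ⟨b, ?_, hbw⟩
          rw [hTi]
          refine Finset.mem_image.2 ⟨j :: b, ?_, rfl⟩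
          simp only [Finset.mem_filter]
          exact ⟨hvT, by rw [hji]; rfl⟩
      calc (1:ℝ) = ∑ i, p i * 1 := by simp [hp1]
        _ ≤ _ := Finset.sum_le_sum (fun i _ => hterm i)


theorem card_le_of_disjoint_balls {n : ℕ} (hn : 1 ≤ n) {ι : Type*} (T : Finset ι)
    (y : ι → EuclideanSpace ℝ (Fin n)) (x : EuclideanSpace ℝ (Fin n)) {ρ₁ ρ₂ : ℝ}
    (h₂ : 0 < ρ₂) (h₁ : 0 ≤ ρ₁)
    (hdisj : (T : Set ι).PairwiseDisjoint (fun i => ball (y i) ρ₂))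
    (hsub : ∀ i ∈ T, ball (y i) ρ₂ ⊆ ball x ρ₁) :
    (T.card : ℝ) * ρ₂ ^ n ≤ ρ₁ ^ n := by
  haveI : Nontrivial (EuclideanSpace ℝ (Fin n)) := by
    refine ⟨EuclideanSpace.single ⟨0, hn⟩ 1, 0, ?_⟩
    intro h
    have := congr_arg (fun z => ‖z‖) h
    simp [EuclideanSpace.norm_single] at this
  set μ : Measure (EuclideanSpace ℝ (Fin n)) := volume
  have hfr : Module.finrank ℝ (EuclideanSpace ℝ (Fin n)) = n := finrank_euclideanSpace_fin
  have hball : ∀ (z : EuclideanSpace ℝ (Fin n)) (ρ : ℝ), 0 ≤ ρ →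
      μ (ball z ρ) = ENNReal.ofReal (ρ ^ n) * μ (ball 0 1) := by
    intro z ρ hρ
    rw [Measure.addHaar_ball μ z hρ, hfr]
  have hsum : μ (⋃ i ∈ T, ball (y i) ρ₂) = ∑ i ∈ T, μ (ball (y i) ρ₂) :=
    measure_biUnion_finset hdisj (fun i _ => measurableSet_ball)
  have hle : ∑ i ∈ T, μ (ball (y i) ρ₂) ≤ μ (ball x ρ₁) := by
    rw [← hsum]
    exact measure_mono (Set.iUnion₂_subset hsub)
  have hc0 : μ (ball (0 : EuclideanSpace ℝ (Fin n)) 1) ≠ 0 :=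
    (measure_ball_pos μ 0 one_pos).ne'
  have hctop : μ (ball (0 : EuclideanSpace ℝ (Fin n)) 1) ≠ ⊤ :=
    measure_ball_lt_top.ne
  have key : (T.card : ℝ≥0∞) * ENNReal.ofReal (ρ₂ ^ n) ≤ ENNReal.ofReal (ρ₁ ^ n) := by
    rw [← ENNReal.mul_le_mul_iff_left hc0 hctop]
    calc (T.card : ℝ≥0∞) * ENNReal.ofReal (ρ₂ ^ n) * μ (ball 0 1)
        = ∑ _i ∈ T, ENNReal.ofReal (ρ₂ ^ n) * μ (ball 0 1) := by
          rw [Finset.sum_const, nsmul_eq_mul, mul_assoc]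
      _ = ∑ i ∈ T, μ (ball (y i) ρ₂) := by
          refine Finset.sum_congr rfl fun i _ => ?_
          rw [hball (y i) ρ₂ h₂.le]
      _ ≤ μ (ball x ρ₁) := hle
      _ = ENNReal.ofReal (ρ₁ ^ n) * μ (ball 0 1) := hball x ρ₁ h₁
  have : ENNReal.ofReal ((T.card : ℝ) * ρ₂ ^ n) ≤ ENNReal.ofReal (ρ₁ ^ n) := by
    rwa [ENNReal.ofReal_mul (by positivity), ENNReal.ofReal_natCast]
  rwa [ENNReal.ofReal_le_ofReal_iff (by positivity)] at this


theorem subset_iUnion_words {f : Fin N → E → E} {A : Set E}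
    (hA : A = ⋃ i, f i '' A) (k : ℕ) :
    A ⊆ ⋃ w : Fin k → Fin N, comp f (List.ofFn w) '' A := by
  induction k with
  | zero =>
    intro a ha
    exact Set.mem_iUnion.2 ⟨fun i => i.elim0, by simpa using ha⟩
  | succ k ih =>
    intro a ha
    rw [hA] at ha
    obtain ⟨i, b, hb, rfl⟩ := by simpa using ha
    obtain ⟨w, c, hc, rfl⟩ := by simpa using ih hb
    refine Set.mem_iUnion.2 ⟨Fin.cons i w, ⟨c, hc, ?_⟩⟩
    have : List.ofFn (Fin.cons i w) = i :: List.ofFn w := by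
      rw [List.ofFn_succ]; simp
    rw [this]
    rfl

theorem map_rpow_prod {r : Fin N → ℝ} (hr : ∀ i, 0 < r i) (s : ℝ) (v : List (Fin N)) :
    (v.map fun i => r i ^ s).prod = prodr r v ^ s := by
  induction v with
  | nil => simp
  | cons i w ih =>
    simp only [List.map_cons, List.prod_cons, prodr_cons, ih]
    rw [Real.mul_rpow (hr i).le (prodr_nonneg (fun j => (hr j).le) w)]

theorem sum_prodr_rpow {r : Fin N → ℝ} (hr : ∀ i, 0 < r i) (t : ℝ) (k : ℕ) :
    ∑ w : Fin k → Fin N, prodr r (List.ofFn w) ^ t = (∑ i, r i ^ t) ^ k := by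
  have h1 : ∀ w : Fin k → Fin N, prodr r (List.ofFn w) ^ t = ∏ j, r (w j) ^ t := by
    intro w
    rw [← map_rpow_prod hr t (List.ofFn w)]
    rw [List.map_ofFn, List.prod_ofFn]
    rfl
  simp only [h1]
  have h2 := Finset.prod_univ_sum (κ := fun _ : Fin k => Fin N)
    (fun _ => Finset.univ) (fun _ i => r i ^ t)
  rw [Fintype.piFinset_univ] at h2
  rw [← h2, Finset.prod_const, Finset.card_univ, Fintype.card_fin]

theorem sum_biUnion_le_real {α β : Type*} [DecidableEq α] [DecidableEq β] (F : Finset α)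
    (T : α → Finset β) (g : β → ℝ) (hg : ∀ b, 0 ≤ g b) :
    ∑ b ∈ F.biUnion T, g b ≤ ∑ a ∈ F, ∑ b ∈ T a, g b := by
  induction F using Finset.induction_on with
  | empty => simp
  | @insert a F ha ih =>
    rw [Finset.biUnion_insert, Finset.sum_insert ha]
    calc ∑ b ∈ T a ∪ F.biUnion T, g b ≤ ∑ b ∈ T a, g b + ∑ b ∈ F.biUnion T, g b := by
          have := Finset.sum_union_inter (s₁ := T a) (s₂ := F.biUnion T) (f := g)
          have h2 : 0 ≤ ∑ b ∈ T a ∩ F.biUnion T, g b :=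
            Finset.sum_nonneg fun b _ => hg b
          linarith
      _ ≤ _ := by linarith [ih]

theorem add_rpow_le_real {a b s : ℝ} (ha : 0 ≤ a) (hb : 0 ≤ b) (hs : 0 ≤ s) :
    (a + b) ^ s ≤ 2 ^ s * (a ^ s + b ^ s) := by
  have h2 : (0:ℝ) ≤ 2 := by norm_num
  rcases le_total a b with h | h
  · calc (a + b) ^ s ≤ (2 * b) ^ s := by
          apply Real.rpow_le_rpow (by linarith) (by linarith) hs
      _ = 2 ^ s * b ^ s := Real.mul_rpow h2 hb
      _ ≤ 2 ^ s * (a ^ s + b ^ s) := by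
          have : 0 ≤ a ^ s := Real.rpow_nonneg ha s
          have h2s : 0 ≤ (2:ℝ) ^ s := Real.rpow_nonneg h2 s
          nlinarith
  · calc (a + b) ^ s ≤ (2 * a) ^ s := by
          apply Real.rpow_le_rpow (by linarith) (by linarith) hs
      _ = 2 ^ s * a ^ s := Real.mul_rpow h2 ha
      _ ≤ 2 ^ s * (a ^ s + b ^ s) := by
          have : 0 ≤ b ^ s := Real.rpow_nonneg hb s
          have h2s : 0 ≤ (2:ℝ) ^ s := Real.rpow_nonneg h2 s
          nlinarith

theorem sum_pow_le_real {c : ℝ} (h0 : 0 ≤ c) (h1 : c < 1) (F : Finset ℕ) :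
    ∑ m ∈ F, c ^ m ≤ 1 / (1 - c) := by
  set M := F.sup id + 1 with hM
  have hsub : F ⊆ Finset.range M := by
    intro m hm
    exact Finset.mem_range.2 (Nat.lt_succ_of_le (Finset.le_sup (f := id) hm))
  calc ∑ m ∈ F, c ^ m ≤ ∑ m ∈ Finset.range M, c ^ m :=
        Finset.sum_le_sum_of_subset_of_nonneg hsub (fun m _ _ => by positivity)
    _ = (c ^ M - 1) / (c - 1) := geom_sum_eq h1.ne M
    _ = (1 - c ^ M) / (1 - c) := by
        rw [div_eq_div_iff (by linarith) (by linarith)]; ring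
    _ ≤ 1 / (1 - c) := by
        have hcM : 0 ≤ c ^ M := by positivity
        have h1c : 0 < 1 - c := by linarith
        gcongr
        linarith


theorem dimH_le_moran {n N : ℕ} (hN : 1 ≤ N)
    (f : Fin N → EuclideanSpace ℝ (Fin n) → EuclideanSpace ℝ (Fin n))
    (r : Fin N → ℝ) (hr : ∀ i, r i ∈ Set.Ioo (0 : ℝ) 1)
    (hf : ∀ i x y, dist (f i x) (f i y) = r i * dist x y)
    (A : Set (EuclideanSpace ℝ (Fin n))) (hAb : Bornology.IsBounded A)
    (hA : A = ⋃ i, f i '' A)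
    (s : ℝ) (hs : 0 ≤ s) (hsum : ∑ i, r i ^ s = 1) :
    dimH A ≤ ENNReal.ofReal s := by
  have hrpos : ∀ i, 0 < r i := fun i => (hr i).1
  have hrlt1 : ∀ i, r i < 1 := fun i => (hr i).2
  obtain ⟨i0⟩ : Nonempty (Fin N) := ⟨⟨0, hN⟩⟩
  set rmax : ℝ := (Finset.univ.image r).max' ⟨r i0, Finset.mem_image_of_mem r (Finset.mem_univ i0)⟩ with hrmaxdef
  have hrmax : ∀ i, r i ≤ rmax := fun i =>
    Finset.le_max' _ _ (Finset.mem_image_of_mem r (Finset.mem_univ i))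
  have hrmaxmem : ∃ i, r i = rmax := by
    have := Finset.max'_mem (Finset.univ.image r)
      ⟨r i0, Finset.mem_image_of_mem r (Finset.mem_univ i0)⟩
    obtain ⟨i, -, hi⟩ := Finset.mem_image.1 this
    exact ⟨i, hi⟩
  obtain ⟨imax, himax⟩ := hrmaxmem
  have hrmaxpos : 0 < rmax := himax ▸ hrpos imax
  have hrmaxlt1 : rmax < 1 := himax ▸ hrlt1 imax
  -- zero measure in dimensions above s
  have hzero : ∀ t : ℝ, s < t → μH[t] A = 0 := by
    intro t hst
    have ht0 : 0 ≤ t := hs.trans hst.le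
    set c : ℝ := ∑ i, r i ^ t with hc
    have hc0 : 0 ≤ c := Finset.sum_nonneg fun i _ => Real.rpow_nonneg (hrpos i).le t
    have hclt : c < 1 := by
      have hterm : ∀ i, r i ^ t ≤ r i ^ s * rmax ^ (t - s) := by
        intro i
        have : r i ^ t = r i ^ s * r i ^ (t - s) := by
          rw [← Real.rpow_add (hrpos i)]; ring_nf
        rw [this]
        exact mul_le_mul_of_nonneg_left
          (Real.rpow_le_rpow (hrpos i).le (hrmax i) (by linarith))
          (Real.rpow_nonneg (hrpos i).le s)
      calc c ≤ ∑ i, r i ^ s * rmax ^ (t - s) := Finset.sum_le_sum fun i _ => hterm i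
        _ = rmax ^ (t - s) * ∑ i, r i ^ s := by rw [← Finset.sum_mul, mul_comm]
        _ = rmax ^ (t - s) := by rw [hsum, mul_one]
        _ < 1 := Real.rpow_lt_one hrmaxpos.le hrmaxlt1 (by linarith)
    have hED : EMetric.diam A ≠ ⊤ := hAb.ediam_ne_top
    have hbound : μH[t] A ≤ Filter.liminf
        (fun k : ℕ => ∑ w : Fin k → Fin N,
          EMetric.diam (comp f (List.ofFn w) '' A) ^ t) Filter.atTop := by
      apply MeasureTheory.Measure.hausdorffMeasure_le_liminf_sum t A
        (fun k => ENNReal.ofReal (rmax ^ k) * EMetric.diam A)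
        ?_ (fun k w => comp f (List.ofFn w) '' A) ?_ ?_
      · have h1 : Filter.Tendsto (fun k : ℕ => ENNReal.ofReal (rmax ^ k))
            Filter.atTop (nhds 0) := by
          rw [show (0 : ℝ≥0∞) = ENNReal.ofReal 0 by simp]
          exact (ENNReal.continuous_ofReal.tendsto 0).comp
            (tendsto_pow_atTop_nhds_zero_of_lt_one hrmaxpos.le hrmaxlt1)
        simpa using ENNReal.Tendsto.mul_const h1 (Or.inr hED)
      · apply Filter.Eventually.of_forall
        intro k w
        have hlip : LipschitzWith (prodr r (List.ofFn w)).toNNReal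
            (comp f (List.ofFn w)) := by
          apply LipschitzWith.of_dist_le_mul
          intro x y
          rw [dist_comp hf, Real.coe_toNNReal _ (prodr_nonneg (fun i => (hrpos i).le) _)]
        calc EMetric.diam (comp f (List.ofFn w) '' A)
            ≤ ((prodr r (List.ofFn w)).toNNReal : ℝ≥0∞) * EMetric.diam A :=
              hlip.ediam_image_le A
          _ ≤ ENNReal.ofReal (rmax ^ k) * EMetric.diam A := by
              apply mul_le_mul_left
              rw [show ((prodr r (List.ofFn w)).toNNReal : ℝ≥0∞)
                = ENNReal.ofReal (prodr r (List.ofFn w)) from rfl]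
              apply ENNReal.ofReal_le_ofReal
              have := prodr_le_pow hrmaxpos.le (fun i => (hrpos i).le) hrmax (List.ofFn w)
              simpa using this
      · exact Filter.Eventually.of_forall fun k => subset_iUnion_words hA k
    have hsumle : ∀ k : ℕ, (∑ w : Fin k → Fin N,
        EMetric.diam (comp f (List.ofFn w) '' A) ^ t)
        ≤ EMetric.diam A ^ t * ENNReal.ofReal (c ^ k) := by
      intro k
      have hterm : ∀ w : Fin k → Fin N, EMetric.diam (comp f (List.ofFn w) '' A) ^ t
          ≤ ENNReal.ofReal (prodr r (List.ofFn w) ^ t) * EMetric.diam A ^ t := by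
        intro w
        have hlip : LipschitzWith (prodr r (List.ofFn w)).toNNReal
            (comp f (List.ofFn w)) := by
          apply LipschitzWith.of_dist_le_mul
          intro x y
          rw [dist_comp hf, Real.coe_toNNReal _ (prodr_nonneg (fun i => (hrpos i).le) _)]
        calc EMetric.diam (comp f (List.ofFn w) '' A) ^ t
            ≤ (((prodr r (List.ofFn w)).toNNReal : ℝ≥0∞) * EMetric.diam A) ^ t :=
              ENNReal.rpow_le_rpow (hlip.ediam_image_le A) ht0
          _ = ENNReal.ofReal (prodr r (List.ofFn w) ^ t) * EMetric.diam A ^ t := by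
              rw [ENNReal.mul_rpow_of_nonneg _ _ ht0,
                show ((prodr r (List.ofFn w)).toNNReal : ℝ≥0∞)
                  = ENNReal.ofReal (prodr r (List.ofFn w)) from rfl,
                ENNReal.ofReal_rpow_of_pos (prodr_pos hrpos _)]
      calc (∑ w : Fin k → Fin N, EMetric.diam (comp f (List.ofFn w) '' A) ^ t)
          ≤ ∑ w : Fin k → Fin N,
            ENNReal.ofReal (prodr r (List.ofFn w) ^ t) * EMetric.diam A ^ t :=
            Finset.sum_le_sum fun w _ => hterm w
        _ = (∑ w : Fin k → Fin N, ENNReal.ofReal (prodr r (List.ofFn w) ^ t))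
            * EMetric.diam A ^ t := by rw [Finset.sum_mul]
        _ = EMetric.diam A ^ t * ENNReal.ofReal (c ^ k) := by
            rw [mul_comm]
            congr 1
            rw [← ENNReal.ofReal_sum_of_nonneg
              (fun w _ => Real.rpow_nonneg (prodr_nonneg (fun i => (hrpos i).le) _) t)]
            rw [sum_prodr_rpow hrpos t k]
    have hlim : Filter.Tendsto (fun k : ℕ => EMetric.diam A ^ t * ENNReal.ofReal (c ^ k))
        Filter.atTop (nhds 0) := by
      have h1 : Filter.Tendsto (fun k : ℕ => ENNReal.ofReal (c ^ k))
          Filter.atTop (nhds 0) := by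
        rw [show (0 : ℝ≥0∞) = ENNReal.ofReal 0 by simp]
        exact (ENNReal.continuous_ofReal.tendsto 0).comp
          (tendsto_pow_atTop_nhds_zero_of_lt_one hc0 hclt)
      have hDt : EMetric.diam A ^ t ≠ ⊤ := ENNReal.rpow_ne_top_of_nonneg ht0 hED
      simpa using ENNReal.Tendsto.const_mul h1 (Or.inr hDt)
    refine le_antisymm ?_ (zero_le)
    calc μH[t] A ≤ _ := hbound
      _ ≤ Filter.liminf (fun k : ℕ => EMetric.diam A ^ t * ENNReal.ofReal (c ^ k))
          Filter.atTop :=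
        Filter.liminf_le_liminf (Filter.Eventually.of_forall hsumle)
      _ = 0 := hlim.liminf_eq
  -- conclude
  by_contra hcon
  push_neg at hcon
  obtain ⟨d, hd1, hd2⟩ := ENNReal.lt_iff_exists_nnreal_btwn.1 hcon
  have hinf : μH[(d : ℝ)] A = ⊤ := hausdorffMeasure_of_lt_dimH hd2
  have hsd : s < (d : ℝ) := by
    rw [← ENNReal.ofReal_coe_nnreal] at hd1
    exact (ENNReal.ofReal_lt_ofReal_iff_of_nonneg hs).1 hd1
  rw [hzero _ hsd] at hinf
  exact (ENNReal.top_ne_zero hinf.symm)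


set_option maxHeartbeats 1600000 in
theorem moran_lower {n N : ℕ} (hn : 1 ≤ n) (hN : 1 ≤ N)
    (f : Fin N → EuclideanSpace ℝ (Fin n) → EuclideanSpace ℝ (Fin n))
    (r : Fin N → ℝ) (hr : ∀ i, r i ∈ Set.Ioo (0 : ℝ) 1)
    (hf : ∀ i x y, dist (f i x) (f i y) = r i * dist x y)
    (A : Set (EuclideanSpace ℝ (Fin n))) (hAne : A.Nonempty) (hAc : IsCompact A)
    (hA : A = ⋃ i, f i '' A)
    (V : Set (EuclideanSpace ℝ (Fin n))) (hVne : V.Nonempty)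
    (hVb : Bornology.IsBounded V) (hVo : IsOpen V)
    (hVmaps : ∀ i, f i '' V ⊆ V)
    (hVdisj : ∀ i j, i ≠ j → f i '' V ∩ f j '' V = ∅)
    (s : ℝ) (hs : 0 < s) (hsum : ∑ i, r i ^ s = 1) :
    ENNReal.ofReal s ≤ dimH A := by
  classical
  have hrpos : ∀ i, 0 < r i := fun i => (hr i).1
  have hrlt1 : ∀ i, r i < 1 := fun i => (hr i).2
  have hrle1 : ∀ i, r i ≤ 1 := fun i => (hr i).2.le
  have hinj : ∀ i, Function.Injective (f i) := by
    intro i a b hab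
    have h := hf i a b
    rw [hab, dist_self] at h
    have h2 : dist a b = 0 := by
      rcases mul_eq_zero.1 h.symm with h' | h'
      · exact absurd h' (hrpos i).ne'
      · exact h'
    exact dist_eq_zero.1 h2
  have hsurj : ∀ i, Function.Surjective (f i) := fun i =>
    similitude_surjective (hrpos i) (hf i)
  have hfimsubA : ∀ i, f i '' A ⊆ A := fun i =>
    le_of_le_of_eq (Set.subset_iUnion (fun j => f j '' A) i) hA.symm
  obtain ⟨i0⟩ : Nonempty (Fin N) := ⟨⟨0, hN⟩⟩
  -- ratio bounds
  set rmax : ℝ := (Finset.univ.image r).max'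
    ⟨r i0, Finset.mem_image_of_mem r (Finset.mem_univ i0)⟩ with hrmaxdef
  have hrmax : ∀ i, r i ≤ rmax := fun i =>
    Finset.le_max' _ _ (Finset.mem_image_of_mem r (Finset.mem_univ i))
  obtain ⟨imax, himax⟩ : ∃ i, r i = rmax := by
    have := Finset.max'_mem (Finset.univ.image r)
      ⟨r i0, Finset.mem_image_of_mem r (Finset.mem_univ i0)⟩
    obtain ⟨i, -, hi⟩ := Finset.mem_image.1 this
    exact ⟨i, hi⟩
  have hrmaxpos : 0 < rmax := himax ▸ hrpos imax
  have hrmaxlt1 : rmax < 1 := himax ▸ hrlt1 imax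
  set rmin : ℝ := (Finset.univ.image r).min'
    ⟨r i0, Finset.mem_image_of_mem r (Finset.mem_univ i0)⟩ with hrmindef
  have hrmin : ∀ i, rmin ≤ r i := fun i =>
    Finset.min'_le _ _ (Finset.mem_image_of_mem r (Finset.mem_univ i))
  obtain ⟨imin, himin⟩ : ∃ i, r i = rmin := by
    have := Finset.min'_mem (Finset.univ.image r)
      ⟨r i0, Finset.mem_image_of_mem r (Finset.mem_univ i0)⟩
    obtain ⟨i, -, hi⟩ := Finset.mem_image.1 this
    exact ⟨i, hi⟩
  have hrminpos : 0 < rmin := himin ▸ hrpos imin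
  -- geometric constants
  obtain ⟨v₀, hv₀⟩ := hVne
  obtain ⟨ρV, hρVpos, hρV⟩ := Metric.isOpen_iff.1 hVo v₀ hv₀
  obtain ⟨R₀, hR₀⟩ := (hAc.isBounded.union hVb).subset_ball v₀
  set R : ℝ := max R₀ 1 with hRdef
  have hRpos : 0 < R := lt_of_lt_of_le one_pos (le_max_right _ _)
  have hAball : A ⊆ ball v₀ R :=
    (Set.subset_union_left.trans hR₀).trans (ball_subset_ball (le_max_left _ _))
  have hVball : V ⊆ ball v₀ R :=
    (Set.subset_union_right.trans hR₀).trans (ball_subset_ball (le_max_left _ _))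
  set C₁ : ℝ := 2 * R + 1 with hC₁
  have hC₁pos : 0 < C₁ := by positivity
  set q : ℝ := (C₁ / (rmin * ρV)) ^ n with hq
  have hqpos : 0 < q := pow_pos (div_pos hC₁pos (mul_pos hrminpos hρVpos)) n
  have hhalflt : (1/2:ℝ) ^ s < 1 := Real.rpow_lt_one (by norm_num) (by norm_num) hs
  have hhalfpos : (0:ℝ) < (1/2:ℝ) ^ s := Real.rpow_pos_of_pos (by norm_num) s
  set Cs : ℝ := 1 / (1 - (1/2:ℝ) ^ s) with hCs
  have hCspos : 0 < Cs := by
    rw [hCs]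
    have : (0:ℝ) < 1 - (1/2:ℝ) ^ s := by linarith
    positivity
  set twos : ℝ := (2:ℝ) ^ s with htwos
  have htwospos : 0 < twos := Real.rpow_pos_of_pos (by norm_num) s
  set B : ℝ := 2 * q * twos * Cs with hB
  have hBpos : 0 < B := by
    rw [hB]
    exact mul_pos (mul_pos (mul_pos two_pos hqpos) htwospos) hCspos
  obtain ⟨ε, hεpos, hε4, hεs⟩ : ∃ ε : ℝ, 0 < ε ∧ ε ≤ 1/4 ∧ ε ^ s ≤ 1 / B := by
    refine ⟨min (1/4 : ℝ) ((1/B) ^ (1/s)),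
      lt_min (by norm_num) (Real.rpow_pos_of_pos (div_pos one_pos hBpos) _),
      min_le_left _ _, ?_⟩
    calc (min (1/4 : ℝ) ((1/B) ^ (1/s))) ^ s ≤ ((1/B) ^ (1/s)) ^ s := by
          apply Real.rpow_le_rpow _ (min_le_right _ _) hs.le
          exact le_min (by norm_num) (Real.rpow_nonneg (div_pos one_pos hBpos).le _)
      _ = 1 / B := by
          rw [← Real.rpow_mul (div_pos one_pos hBpos).le, one_div_mul_cancel hs.ne',
            Real.rpow_one]
  set c₀ : ℝ := 1 / (2 * q * twos) with hc₀
  have hc₀pos : 0 < c₀ :=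
    div_pos one_pos (mul_pos (mul_pos two_pos hqpos) htwospos)
  -- main estimate
  have hmain : ENNReal.ofReal c₀ ≤ μH[s] A := by
    rw [MeasureTheory.Measure.hausdorffMeasure_apply]
    refine le_iSup₂_of_le (ENNReal.ofReal (1/4)) (ENNReal.ofReal_pos.2 (by norm_num)) ?_
    refine le_iInf fun t => le_iInf fun htA => le_iInf fun htd => ?_
    set dd : ℕ → ℝ := fun m => (EMetric.diam (t m)).toReal with hdd
    have hdtop : ∀ m, EMetric.diam (t m) ≠ ⊤ :=
      fun m => ((htd m).trans_lt ENNReal.ofReal_lt_top).ne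
    have hd0 : ∀ m, 0 ≤ dd m := fun m => ENNReal.toReal_nonneg
    have hd14 : ∀ m, dd m ≤ 1/4 :=
      fun m => ENNReal.toReal_le_of_le_ofReal (by norm_num) (htd m)
    set ρ : ℕ → ℝ := fun m => dd m + ε * (1/2:ℝ) ^ m with hρ
    have hρpos : ∀ m, 0 < ρ m := fun m => by
      have h1 : (0:ℝ) < ε * (1/2:ℝ) ^ m := mul_pos hεpos (by positivity)
      have h2 := hd0 m
      simp only [hρ]; linarith
    have hρlt1 : ∀ m, ρ m < 1 := fun m => by
      have h1 : ε * (1/2:ℝ) ^ m ≤ ε * 1 := by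
        apply mul_le_mul_of_nonneg_left _ hεpos.le
        apply pow_le_one₀ (by norm_num) (by norm_num)
      have := hd14 m
      simp only [hρ]
      nlinarith [hε4]
    set x : ℕ → EuclideanSpace ℝ (Fin n) :=
      fun m => if h : (t m).Nonempty then h.choose else v₀ with hx
    set U : ℕ → Set (EuclideanSpace ℝ (Fin n)) :=
      fun m => if (t m).Nonempty then ball (x m) (ρ m) else ∅ with hU
    have hUopen : ∀ m, IsOpen (U m) := by
      intro m
      simp only [hU]
      split_ifs
      · exact isOpen_ball
      · exact isOpen_empty
    have htU : ∀ m, t m ⊆ U m := by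
      intro m y hy
      have hne : (t m).Nonempty := ⟨y, hy⟩
      have hxm : x m ∈ t m := by
        simp only [hx, dif_pos hne]
        exact hne.choose_spec
      have hb : Bornology.IsBounded (t m) :=
        Metric.isBounded_iff_ediam_ne_top.2 (hdtop m)
      have hdle : dist y (x m) ≤ dd m := Metric.dist_le_diam_of_mem hb hy hxm
      have hlt : dist y (x m) < ρ m := by
        have h1 : (0:ℝ) < ε * (1/2:ℝ) ^ m := mul_pos hεpos (by positivity)
        simp only [hρ]; linarith
      simp only [hU, if_pos hne]
      exact mem_ball.2 hlt
    obtain ⟨F, hFc⟩ := hAc.elim_finite_subcover U hUopen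
      (htA.trans (Set.iUnion_mono htU))
    set F' : Finset ℕ := F.filter (fun m => (t m).Nonempty) with hF'
    have hF'ne : ∀ m ∈ F', (t m).Nonempty := fun m hm => (Finset.mem_filter.1 hm).2
    have hF'c : A ⊆ ⋃ m ∈ F', U m := by
      intro a ha
      obtain ⟨m, hmF, hma⟩ := Set.mem_iUnion₂.1 (hFc ha)
      have hne : (t m).Nonempty := by
        by_contra h
        rw [hU] at hma
        simp only [if_neg h] at hma
        exact hma
      exact Set.mem_iUnion₂.2 ⟨m, Finset.mem_filter.2 ⟨hmF, hne⟩, hma⟩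
    have hF'nonempty : F'.Nonempty := by
      obtain ⟨a, ha⟩ := hAne
      obtain ⟨m, hm, -⟩ := Set.mem_iUnion₂.1 (hF'c ha)
      exact ⟨m, hm⟩
    set e₀ : ℝ := (F'.image ρ).min' (hF'nonempty.image ρ) with he₀def
    have he₀le : ∀ m ∈ F', e₀ ≤ ρ m := fun m hm =>
      Finset.min'_le _ _ (Finset.mem_image_of_mem ρ hm)
    have he₀pos : 0 < e₀ := by
      obtain ⟨m, hm, hme⟩ := Finset.mem_image.1
        (Finset.min'_mem (F'.image ρ) (hF'nonempty.image ρ))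
      rw [he₀def, ← hme]
      exact hρpos m
    obtain ⟨K, hK⟩ := exists_pow_lt_of_lt_one he₀pos hrmaxlt1
    set S : ℕ → Set (List (Fin N)) := fun m =>
      {v | v.length ≤ K ∧ IsCut r (ρ m) v ∧ (comp f v '' A ∩ U m).Nonempty} with hS
    have hSfin : ∀ m, (S m).Finite := fun m =>
      (List.finite_length_le (Fin N) K).subset (fun v hv => hv.1)
    set T : ℕ → Finset (List (Fin N)) := fun m => (hSfin m).toFinset with hT
    have hmemT : ∀ m v, v ∈ T m ↔ v ∈ S m := by
      intro m v
      simp only [hT, Set.Finite.mem_toFinset]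
    -- Kraft inequality
    have hkraft : 1 ≤ ∑ v ∈ F'.biUnion T, ((v.map fun i => r i ^ s).prod) := by
      apply kraft hN _ (fun i => Real.rpow_nonneg (hrpos i).le s) hsum K
      intro w
      obtain ⟨a', ha'⟩ := hAne
      have haA : comp f (List.ofFn w) a' ∈ A :=
        comp_image_subset hfimsubA (List.ofFn w) ⟨a', ha', rfl⟩
      obtain ⟨m, hmF', haU⟩ := Set.mem_iUnion₂.1 (hF'c haA)
      have hprod : prodr r (List.ofFn w) ≤ ρ m := by
        calc prodr r (List.ofFn w) ≤ rmax ^ K := by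
              have := prodr_le_pow hrmaxpos.le (fun i => (hrpos i).le) hrmax (List.ofFn w)
              simpa using this
          _ ≤ e₀ := hK.le
          _ ≤ ρ m := he₀le m hmF'
      obtain ⟨v, hvpre, hvcut⟩ := cut_exists hrpos (hρlt1 m) (List.ofFn w) hprod
      refine ⟨v, Finset.mem_biUnion.2 ⟨m, hmF', ?_⟩, hvpre⟩
      rw [hmemT]
      refine ⟨le_trans hvpre.length_le (by simp), hvcut, ⟨comp f (List.ofFn w) a', ?_, haU⟩⟩
      obtain ⟨u, hu⟩ := hvpre
      rw [← hu, comp_append]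
      exact ⟨comp f u a', comp_image_subset hfimsubA u ⟨a', ha', rfl⟩, rfl⟩
    -- cardinality bound
    have hcard : ∀ m ∈ F', ((T m).card : ℝ) ≤ q := by
      intro m hm
      have hne : (t m).Nonempty := hF'ne m hm
      have hUm : U m = ball (x m) (ρ m) := by
        simp only [hU, if_pos hne]
      set ρ₂ : ℝ := rmin * ρV * ρ m with hρ₂
      have hρ₂pos : 0 < ρ₂ := mul_pos (mul_pos hrminpos hρVpos) (hρpos m)
      have hprodlb : ∀ v ∈ T m, rmin * ρ m ≤ prodr r v := by
        intro v hv
        obtain ⟨hlen, ⟨u, i, hvui, hle, hgt⟩, hmeet⟩ := (hmemT m v).1 hv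
        rw [hvui, prodr_append, prodr_cons, prodr_nil, mul_one]
        have h1 : rmin ≤ r i := hrmin i
        have h2 : ρ m < prodr r u := hgt
        nlinarith [hρpos m, hrminpos]
      have hprodub : ∀ v ∈ T m, prodr r v ≤ ρ m := by
        intro v hv
        obtain ⟨hlen, ⟨u, i, hvui, hle, hgt⟩, hmeet⟩ := (hmemT m v).1 hv
        exact hle
      have hsmall : ∀ v ∈ T m, ball (comp f v v₀) ρ₂ ⊆ comp f v '' V := by
        intro v hv
        calc ball (comp f v v₀) ρ₂ ⊆ ball (comp f v v₀) (prodr r v * ρV) := by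
              apply ball_subset_ball
              have := hprodlb v hv
              rw [hρ₂]
              nlinarith [hρVpos]
          _ = comp f v '' ball v₀ ρV :=
              (image_ball (prodr_pos hrpos v) (dist_comp hf v)
                (comp_surjective hsurj v) v₀ ρV).symm
          _ ⊆ comp f v '' V := Set.image_mono hρV
      have hin : ∀ v ∈ T m, comp f v '' V ⊆ ball (x m) (C₁ * ρ m) := by
        intro v hv
        obtain ⟨hlen, hcut, a, ⟨a'', ha''A, haeq⟩, haU⟩ := (hmemT m v).1 hv
        rintro z ⟨z', hz', rfl⟩
        rw [hUm, mem_ball] at haU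
        have hVd : dist z' a'' ≤ 2 * R := by
          have h1 : dist z' v₀ < R := mem_ball.1 (hVball hz')
          have h2 : dist a'' v₀ < R := mem_ball.1 (hAball ha''A)
          calc dist z' a'' ≤ dist z' v₀ + dist v₀ a'' := dist_triangle _ _ _
            _ ≤ 2 * R := by rw [dist_comm v₀ a'']; linarith
        have hple : prodr r v ≤ ρ m := hprodub v hv
        rw [mem_ball]
        calc dist (comp f v z') (x m) ≤ dist (comp f v z') a + dist a (x m) :=
              dist_triangle _ _ _
          _ = prodr r v * dist z' a'' + dist a (x m) := by
              rw [← haeq, dist_comp hf]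
          _ < ρ m * (2 * R) + ρ m := by
              have h3 : prodr r v * dist z' a'' ≤ ρ m * (2 * R) := by
                apply mul_le_mul hple hVd (dist_nonneg) (hρpos m).le
              linarith
          _ = C₁ * ρ m := by rw [hC₁]; ring
      have hdisjballs : ((T m : Set (List (Fin N)))).PairwiseDisjoint
          (fun v => ball (comp f v v₀) ρ₂) := by
        intro v₁ h₁ v₂ h₂ hne'
        rw [Finset.mem_coe] at h₁ h₂
        obtain ⟨-, hcut₁, -⟩ := (hmemT m v₁).1 h₁
        obtain ⟨-, hcut₂, -⟩ := (hmemT m v₂).1 h₂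
        have hdve : comp f v₁ '' V ∩ comp f v₂ '' V = ∅ :=
          disjoint_images hinj hVmaps hVdisj
            (cut_not_prefix hrpos hrle1 hcut₁ hcut₂ hne')
            (cut_not_prefix hrpos hrle1 hcut₂ hcut₁ (Ne.symm hne'))
        exact (Set.disjoint_iff_inter_eq_empty.2 hdve).mono
          (hsmall v₁ h₁) (hsmall v₂ h₂)
      have hineq := card_le_of_disjoint_balls hn (T m) (fun v => comp f v v₀) (x m)
        hρ₂pos (mul_pos hC₁pos (hρpos m)).le hdisjballs
        (fun v hv => (hsmall v hv).trans (hin v hv))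
      have hqeq : (C₁ * ρ m) ^ n = q * ρ₂ ^ n := by
        rw [hq, hρ₂, ← mul_pow]
        congr 1
        field_simp
      rw [hqeq] at hineq
      exact le_of_mul_le_mul_right hineq (pow_pos hρ₂pos n)
    -- weight bound per piece
    have hweight : ∀ m ∈ F', ∑ v ∈ T m, ((v.map fun i => r i ^ s).prod) ≤ q * ρ m ^ s := by
      intro m hm
      have h1 : ∀ v ∈ T m, ((v.map fun i => r i ^ s).prod) ≤ ρ m ^ s := by
        intro v hv
        obtain ⟨hlen, ⟨u, i, hvui, hle, hgt⟩, hmeet⟩ := (hmemT m v).1 hv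
        rw [map_rpow_prod hrpos s v]
        exact Real.rpow_le_rpow (prodr_nonneg (fun j => (hrpos j).le) v) hle hs.le
      calc ∑ v ∈ T m, ((v.map fun i => r i ^ s).prod)
          ≤ (T m).card • (ρ m ^ s) := Finset.sum_le_card_nsmul _ _ _ h1
        _ = ((T m).card : ℝ) * ρ m ^ s := nsmul_eq_mul _ _
        _ ≤ q * ρ m ^ s := by
            apply mul_le_mul_of_nonneg_right (hcard m hm)
            exact Real.rpow_nonneg (hρpos m).le s
    -- combine
    have hprodnn : ∀ v : List (Fin N), 0 ≤ ((v.map fun i => r i ^ s).prod) := by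
      intro v
      apply List.prod_nonneg
      intro y hy
      obtain ⟨i, -, rfl⟩ := List.mem_map.1 hy
      exact Real.rpow_nonneg (hrpos i).le s
    have hchain : 1 ≤ q * ∑ m ∈ F', ρ m ^ s := by
      calc (1:ℝ) ≤ ∑ v ∈ F'.biUnion T, ((v.map fun i => r i ^ s).prod) := hkraft
        _ ≤ ∑ m ∈ F', ∑ v ∈ T m, ((v.map fun i => r i ^ s).prod) :=
            sum_biUnion_le_real F' T _ hprodnn
        _ ≤ ∑ m ∈ F', q * ρ m ^ s := Finset.sum_le_sum hweight
        _ = q * ∑ m ∈ F', ρ m ^ s := by rw [Finset.mul_sum]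
    have hρs : ∀ m, ρ m ^ s ≤ twos * (dd m ^ s + (ε * (1/2:ℝ) ^ m) ^ s) := by
      intro m
      exact add_rpow_le_real (hd0 m) (mul_pos hεpos (by positivity)).le hs.le
    have hgeom : ∑ m ∈ F', (ε * (1/2:ℝ) ^ m) ^ s ≤ ε ^ s * Cs := by
      have heq : ∀ m : ℕ, (ε * (1/2:ℝ) ^ m) ^ s = ε ^ s * ((1/2:ℝ) ^ s) ^ m := by
        intro m
        rw [Real.mul_rpow hεpos.le (by positivity)]
        congr 1
        rw [← Real.rpow_natCast ((1/2:ℝ)) m, ← Real.rpow_mul (by norm_num), mul_comm,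
          Real.rpow_mul (by norm_num), Real.rpow_natCast]
      simp only [heq]
      rw [← Finset.mul_sum]
      apply mul_le_mul_of_nonneg_left _ (Real.rpow_nonneg hεpos.le s)
      exact sum_pow_le_real hhalfpos.le hhalflt F'
    have hsumd : c₀ ≤ ∑ m ∈ F', dd m ^ s := by
      set Sd : ℝ := ∑ m ∈ F', dd m ^ s with hSd
      have hSdnn : 0 ≤ Sd := Finset.sum_nonneg fun m _ =>
        Real.rpow_nonneg (hd0 m) s
      have h1 : ∑ m ∈ F', ρ m ^ s ≤ twos * (Sd + ε ^ s * Cs) := by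
        calc ∑ m ∈ F', ρ m ^ s
            ≤ ∑ m ∈ F', twos * (dd m ^ s + (ε * (1/2:ℝ) ^ m) ^ s) :=
              Finset.sum_le_sum fun m _ => hρs m
          _ = twos * (Sd + ∑ m ∈ F', (ε * (1/2:ℝ) ^ m) ^ s) := by
              rw [← Finset.mul_sum, Finset.sum_add_distrib]
          _ ≤ twos * (Sd + ε ^ s * Cs) := by
              apply mul_le_mul_of_nonneg_left _ htwospos.le
              linarith [hgeom]
      have h2 : 1 ≤ q * twos * Sd + q * twos * (ε ^ s * Cs) := by
        have := mul_le_mul_of_nonneg_left h1 hqpos.le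
        calc (1:ℝ) ≤ q * ∑ m ∈ F', ρ m ^ s := hchain
          _ ≤ q * (twos * (Sd + ε ^ s * Cs)) := this
          _ = q * twos * Sd + q * twos * (ε ^ s * Cs) := by ring
      have h3 : q * twos * (ε ^ s * Cs) ≤ 1 / 2 := by
        have h4 : q * twos * (ε ^ s * Cs) ≤ q * twos * ((1/B) * Cs) := by
          apply mul_le_mul_of_nonneg_left _ (mul_pos hqpos htwospos).le
          apply mul_le_mul_of_nonneg_right hεs hCspos.le
        have h5 : q * twos * ((1/B) * Cs) = 1/2 := by
          rw [hB]
          field_simp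
        linarith
      have h6 : 1/2 ≤ q * twos * Sd := by linarith
      rw [hc₀]
      rw [div_le_iff₀ (mul_pos (mul_pos two_pos hqpos) htwospos)]
      nlinarith
    -- conclude in ℝ≥0∞
    calc ENNReal.ofReal c₀ ≤ ENNReal.ofReal (∑ m ∈ F', dd m ^ s) :=
          ENNReal.ofReal_le_ofReal hsumd
      _ = ∑ m ∈ F', ENNReal.ofReal (dd m ^ s) :=
          ENNReal.ofReal_sum_of_nonneg (fun m _ => Real.rpow_nonneg (hd0 m) s)
      _ = ∑ m ∈ F', ⨆ _ : (t m).Nonempty, EMetric.diam (t m) ^ s := by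
          refine Finset.sum_congr rfl fun m hm => ?_
          rw [iSup_pos (hF'ne m hm)]
          rw [← ENNReal.ofReal_rpow_of_nonneg (hd0 m) hs.le,
            ENNReal.ofReal_toReal (hdtop m)]
      _ ≤ ∑' m, ⨆ _ : (t m).Nonempty, EMetric.diam (t m) ^ s := ENNReal.sum_le_tsum F'
  -- conclude
  have hne0 : μH[s] A ≠ 0 := by
    intro h0
    rw [h0] at hmain
    exact absurd (le_antisymm hmain (zero_le))
      (by simp [ENNReal.ofReal_eq_zero]; linarith)
  apply ENNReal.le_of_forall_nnreal_lt
  intro d hd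
  have hds : (d : ℝ) < s := by
    rw [← ENNReal.ofReal_coe_nnreal] at hd
    exact (ENNReal.ofReal_lt_ofReal_iff hs).1 hd
  rcases MeasureTheory.Measure.hausdorffMeasure_zero_or_top hds A with h | h
  · exact absurd h hne0
  · exact le_dimH_of_hausdorffMeasure_eq_top h

end MoranAux

/-- Moran–Hutchinson theorem: let `f 1, …, f N : ℝ^n → ℝ^n` (`N ≥ 1`) be similitudes with
ratios `r i ∈ (0,1)`, let `A` be a non-empty compact set with `A = ⋃ i, f i '' A`, and
suppose the open set condition holds for a non-empty bounded open set `V`. If `s ≥ 0`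
satisfies `∑ i, r i ^ s = 1`, then `dimH A = s`. -/
theorem moran_hutchinson (n N : ℕ) (hN : 1 ≤ N)
    (f : Fin N → EuclideanSpace ℝ (Fin n) → EuclideanSpace ℝ (Fin n))
    (r : Fin N → ℝ) (hr : ∀ i, r i ∈ Set.Ioo (0 : ℝ) 1)
    (hf : ∀ i x y, dist (f i x) (f i y) = r i * dist x y)
    (A : Set (EuclideanSpace ℝ (Fin n))) (hAne : A.Nonempty) (hAc : IsCompact A)
    (hA : A = ⋃ i, f i '' A)
    (V : Set (EuclideanSpace ℝ (Fin n))) (hVne : V.Nonempty)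
    (hVb : Bornology.IsBounded V) (hVo : IsOpen V)
    (hVmaps : ∀ i, f i '' V ⊆ V)
    (hVdisj : ∀ i j, i ≠ j → f i '' V ∩ f j '' V = ∅)
    (s : ℝ) (hs : 0 ≤ s) (hsum : ∑ i, r i ^ s = 1) :
    dimH A = ENNReal.ofReal s := by
  classical
  have hupper : dimH A ≤ ENNReal.ofReal s :=
    MoranAux.dimH_le_moran hN f r hr hf A hAc.isBounded hA s hs hsum
  rcases eq_or_lt_of_le hs with hs0 | hs0
  · rw [← hs0] at hupper ⊢
    rw [ENNReal.ofReal_zero] at hupper ⊢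
    exact le_antisymm hupper (zero_le)
  · rcases Nat.eq_zero_or_pos n with hn0 | hn
    · exfalso
      subst hn0
      have hN1 : N = 1 := by
        by_contra hN1
        have hN2 : 2 ≤ N := by omega
        obtain ⟨v, hv⟩ := hVne
        have hij : (⟨0, by omega⟩ : Fin N) ≠ ⟨1, by omega⟩ := by
          intro h
          exact absurd (congr_arg Fin.val h) (by norm_num)
        have hd := hVdisj _ _ hij
        have hmem : f ⟨0, by omega⟩ v ∈ f ⟨0, by omega⟩ '' V ∩ f ⟨1, by omega⟩ '' V := by
          constructor
          · exact ⟨v, hv, rfl⟩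
          · refine ⟨v, hv, ?_⟩
            exact Subsingleton.elim _ _
        rw [hd] at hmem
        exact hmem
      subst hN1
      have h1 : r 0 ^ s = 1 := by
        have := hsum
        rw [Fin.sum_univ_one] at this
        exact this
      have h2 : r 0 ^ s < 1 :=
        Real.rpow_lt_one ((hr 0).1).le (hr 0).2 hs0
      rw [h1] at h2
      exact lt_irrefl _ h2
    · exact le_antisymm hupper
        (MoranAux.moran_lower hn hN f r hr hf A hAne hAc hA V hVne hVb hVo hVmaps hVdisj
          s hs0 hsum)
end
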